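/- arXiv:2105.00711 — 7 statements merged into one kernel-verified Lean document; each statement's English description precedes it below -/
import Mathlib

section
/- Let X and Z be disjoint finite sets, let Q be a partial order relation on Z, and let y be a point not contained in X ∪ Z. Then the cardinality of 𝔑*_{Q+A_y}(X, Z∪{y}) equals the cardinality of ℑ_{Q^d}(X, Z). Equivalently: the number of posets on X ∪ Z containing Q as an induced sub-poset equals the number of posets R on X ∪ Z ∪ {y} which contain Q^d + A_y as an induced sub-poset and in which the maximal points of Q^d + A_y are exactly the maximal points of R. -/
namespace Erne

variable {α : Type*}

/-- A partial order relation with carrier `X`: a reflexive, antisymmetric,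
transitive subset of `X × X`. -/
def IsPor (X : Set α) (R : Set (α × α)) : Prop :=
  R ⊆ X ×ˢ X ∧ (∀ x ∈ X, (x, x) ∈ R) ∧
    (∀ x y, (x, y) ∈ R → (y, x) ∈ R → x = y) ∧
    (∀ x y z, (x, y) ∈ R → (y, z) ∈ R → (x, z) ∈ R)

/-- The carrier of a p.o.r. (recovered from reflexivity). -/
def carrier (R : Set (α × α)) : Set α := {x | (x, x) ∈ R}

/-- The induced p.o.r. `R|_M = R ∩ (M × M)`. -/
def restrict (R : Set (α × α)) (M : Set α) : Set (α × α) := R ∩ M ×ˢ M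

/-- The dual `R^d`. -/
def dual (R : Set (α × α)) : Set (α × α) := {p | (p.2, p.1) ∈ R}

/-- `↑_R M`. -/
def upSet (R : Set (α × α)) (M : Set α) : Set α := {x | ∃ y ∈ M, (y, x) ∈ R}

/-- `↓_R M`. -/
def downSet (R : Set (α × α)) (M : Set α) : Set α := {x | ∃ y ∈ M, (x, y) ∈ R}

/-- `↑_R x`. -/
def up (R : Set (α × α)) (x : α) : Set α := {z | (x, z) ∈ R}

/-- `↓_R y`. -/
def down (R : Set (α × α)) (y : α) : Set α := {x | (x, y) ∈ R}

/-- `L` is a lower end of `R`. -/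
def IsLowerEnd (R : Set (α × α)) (L : Set α) : Prop :=
  ∀ x y, (x, y) ∈ R → y ∈ L → x ∈ L

/-- `U` is an upper end of `R`. -/
def IsUpperEnd (R : Set (α × α)) (U : Set α) : Prop :=
  ∀ x y, (x, y) ∈ R → x ∈ U → y ∈ U

/-- `M` is convex in `R`. -/
def IsConvex (R : Set (α × α)) (M : Set α) : Prop :=
  ∀ a b x, a ∈ M → b ∈ M → (a, x) ∈ R → (x, b) ∈ R → x ∈ M

/-- The set of maximal points of `R`: those `x` with `↑_R x = {x}`. -/
def maxPts (R : Set (α × α)) : Set α := {x | up R x = {x}}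

/-- `max M = max R|_M`. -/
def maxOf (R : Set (α × α)) (M : Set α) : Set α := maxPts (restrict R M)

/-- `γ_R(M) = ⋃_{(m,n) ∈ M×M} (↑_R m) ∩ (↓_R n)`, the convex hull of `M` in `R`. -/
def gamma (R : Set (α × α)) (M : Set α) : Set α :=
  {x | ∃ m ∈ M, ∃ n ∈ M, (m, x) ∈ R ∧ (x, n) ∈ R}

/-- The antichain (diagonal) `Δ_Y` on `Y`. -/
def diag (Y : Set α) : Set (α × α) := {p | p.1 = p.2 ∧ p.1 ∈ Y}

/-- `𝔘(X,Y)`: p.o.r.'s on `X ∪ Y` in which `Y` is an upper end. -/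
def Uset (X Y : Set α) : Set (Set (α × α)) :=
  {R | IsPor (X ∪ Y) R ∧ IsUpperEnd R Y}

/-- `ℭ_Q(X,Y)`: p.o.r.'s on `X ∪ Y` with `R|_Y = Q` convex in `R`. -/
def Cset (Q : Set (α × α)) (X Y : Set α) : Set (Set (α × α)) :=
  {R | IsPor (X ∪ Y) R ∧ restrict R Y = Q ∧ IsConvex R Y}

/-- `𝔐_Q(X,Y) = 𝔘(X,Y) ∩ ℭ_Q(X,Y)`. -/
def Mset (Q : Set (α × α)) (X Y : Set α) : Set (Set (α × α)) :=
  Uset X Y ∩ Cset Q X Y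

/-- `𝔐*_Q(X,Y)`: members of `ℭ_Q(X,Y)` with `max Q = max R`. -/
def MstarSet (Q : Set (α × α)) (X Y : Set α) : Set (Set (α × α)) :=
  {R ∈ Cset Q X Y | maxPts Q = maxPts R}

/-- `ℑ_Q(X,Y)`: p.o.r.'s on `X ∪ Y` with `R|_Y = Q`. -/
def Iset (Q : Set (α × α)) (X Y : Set α) : Set (Set (α × α)) :=
  {R | IsPor (X ∪ Y) R ∧ restrict R Y = Q}

/-- `𝔑*_Q(X,Y)`: members of `ℑ_Q(X,Y)` with `max Q = max R`. -/
def NstarSet (Q : Set (α × α)) (X Y : Set α) : Set (Set (α × α)) :=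
  {R ∈ Iset Q X Y | maxPts Q = maxPts R}

/-- `τ_{X,Y}(R) = (R|_X)^d ∪ ((X×Y) \ R) ∪ (R|_Y)^d`. -/
def tau (X Y : Set α) (R : Set (α × α)) : Set (α × α) :=
  dual (restrict R X) ∪ ((X ×ˢ Y) \ R) ∪ dual (restrict R Y)

/-- `𝒢_Q(M)`: members `G` of `ℑ_Q(M,Y)` with `γ_G(Y) = c(G)`. -/
def GsetM (Q : Set (α × α)) (Y M : Set α) : Set (Set (α × α)) :=
  {G ∈ Iset Q M Y | gamma G Y = carrier G}

/-- `𝔊_Q(X) = ⋃_{M ⊆ X} 𝒢_Q(M)`. -/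
def Gset (Q : Set (α × α)) (X Y : Set α) : Set (Set (α × α)) :=
  {G | ∃ M ⊆ X, G ∈ GsetM Q Y M}

/-- `ℒ(P)`: the lower ends of `P` (subsets of the carrier of `P`). -/
def lowerEnds (P : Set (α × α)) : Set (Set α) :=
  {L | L ⊆ carrier P ∧ IsLowerEnd P L}

/-- `ℋ_Q(Y, ℒ(P))`: mappings `f : Y → ℒ(P)` with `(a,b) ∈ Q → f a ⊆ f b`. -/
def Hset (Q P : Set (α × α)) (Y : Set α) : Set (↥Y → Set α) :=
  {f | (∀ y, f y ∈ lowerEnds P) ∧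
    ∀ a b : ↥Y, ((a : α), (b : α)) ∈ Q → f a ⊆ f b}

/-- `Φ(f) = P ∪ Q ∪ ⋃_{y ∈ Y} (f(y) × {y})` for `f ∈ ℋ_Q(Y, ℒ(P))`. -/
def Phi (Q : Set (α × α)) (Y : Set α) (P : Set (α × α)) (f : ↥Y → Set α) :
    Set (α × α) :=
  P ∪ Q ∪ {p | ∃ h : p.2 ∈ Y, p.1 ∈ f ⟨p.2, h⟩}

/-- `𝔉_Q(X,Y)`: pairs `(P, f)` with `P ∈ 𝔓(X)` and `f ∈ ℋ_Q(Y, ℒ(P))`;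
the first component encodes `S(f) = P`. -/
def Fset (Q : Set (α × α)) (X Y : Set α) :
    Set (Set (α × α) × (↥Y → Set α)) :=
  {pf | IsPor X pf.1 ∧ pf.2 ∈ Hset Q pf.1 Y}

/-- `𝔉*_Q(X,Y)`: those `f ∈ 𝔉_Q(X,Y)` with `X = ⋃_{y ∈ Y} f(y)`. -/
def FstarSet (Q : Set (α × α)) (X Y : Set α) :
    Set (Set (α × α) × (↥Y → Set α)) :=
  {pf ∈ Fset Q X Y | X = ⋃ y : ↥Y, pf.2 y}

/-- The transitive hull of `S`: the smallest transitive relation containing `S`. -/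
def transHull (S : Set (α × α)) : Set (α × α) :=
  {p | Relation.TransGen (fun a b => (a, b) ∈ S) p.1 p.2}

section Stmt0Aux

variable {α : Type*}

lemma mem_left_of_isPor {W : Set α} {R : Set (α × α)} (h : IsPor W R) {a b : α}
    (hab : (a, b) ∈ R) : a ∈ W := (h.1 hab).1

lemma mem_right_of_isPor {W : Set α} {R : Set (α × α)} (h : IsPor W R) {a b : α}
    (hab : (a, b) ∈ R) : b ∈ W := (h.1 hab).2

lemma restrict_isPor {V W : Set α} {S : Set (α × α)} (hS : IsPor V S) (hWV : W ⊆ V) :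
    IsPor W (restrict S W) := by
  refine ⟨fun p hp => hp.2, fun x hx => ⟨hS.2.1 x (hWV hx), hx, hx⟩, ?_, ?_⟩
  · exact fun a b hab hba => hS.2.2.1 a b hab.1 hba.1
  · rintro a b c ⟨hab, ha, hb⟩ ⟨hbc, hb', hc⟩
    exact ⟨hS.2.2.2 a b c hab hbc, ha, hc⟩

lemma restrict_restrict {S : Set (α × α)} {M N : Set α} (h : N ⊆ M) :
    restrict (restrict S M) N = restrict S N := by
  ext ⟨a, b⟩
  constructor
  · rintro ⟨⟨hS, -, -⟩, ha, hb⟩; exact ⟨hS, ha, hb⟩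
  · rintro ⟨hS, ha, hb⟩; exact ⟨⟨hS, h ha, h hb⟩, ha, hb⟩

lemma dual_dual (Q : Set (α × α)) : dual (dual Q) = Q := rfl

/-- τ over a partition `L / Lᶜ`: dualize within the parts, complement cross pairs. -/
def tauP (L : Set α) (R : Set (α × α)) : Set (α × α) :=
  {p | ((p.1 ∈ L ↔ p.2 ∈ L) ∧ (p.2, p.1) ∈ R) ∨
       (p.1 ∈ L ∧ (p.2, p.2) ∈ R ∧ p.2 ∉ L ∧ (p.1, p.2) ∉ R)}

lemma tauP_isPor {W L : Set α} {R : Set (α × α)} (hR : IsPor W R) (hLW : L ⊆ W) :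
    IsPor W (tauP L R) := by
  obtain ⟨hsub, hrefl, hanti, htrans⟩ := hR
  refine ⟨?_, ?_, ?_, ?_⟩
  · rintro ⟨a, b⟩ (⟨-, h⟩ | ⟨ha, hb, -, -⟩)
    · exact ⟨(hsub h).2, (hsub h).1⟩
    · exact ⟨hLW ha, (hsub hb).1⟩
  · intro x hx; exact Or.inl ⟨Iff.rfl, hrefl x hx⟩
  · rintro a b (⟨h1, h2⟩ | ⟨h1, h2, h3, h4⟩) (⟨g1, g2⟩ | ⟨g1, g2, g3, g4⟩)
    · exact hanti _ _ g2 h2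
    · exact absurd (h1.mpr g1) g3
    · exact absurd (g1.mpr h1) h3
    · exact absurd g1 h3
  · rintro a b c (⟨h1, h2⟩ | ⟨h1, hb2, h3, h4⟩) (⟨g1, g2⟩ | ⟨g1, g2, g3, g4⟩)
    · exact Or.inl ⟨h1.trans g1, htrans _ _ _ g2 h2⟩
    · exact Or.inr ⟨h1.mpr g1, g2, g3, fun hac => g4 (htrans _ _ _ h2 hac)⟩
    · refine Or.inr ⟨h1, hrefl c (hsub g2).1, fun hc => h3 (g1.mpr hc),
        fun hac => h4 (htrans _ _ _ hac g2)⟩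
    · exact absurd g1 h3

lemma tauP_lowerEnd {L : Set α} {R : Set (α × α)} : IsLowerEnd (tauP L R) L := by
  rintro a b (⟨h1, -⟩ | ⟨-, -, h3, -⟩) hb
  · exact h1.mpr hb
  · exact absurd hb h3

lemma tauP_tauP {W L : Set α} {R : Set (α × α)} (hR : IsPor W R) (hLW : L ⊆ W)
    (hlow : IsLowerEnd R L) : tauP L (tauP L R) = R := by
  ext ⟨a, b⟩
  constructor
  · rintro (⟨h1, (⟨g1, g2⟩ | ⟨g1, g2, g3, g4⟩)⟩ | ⟨h1, h2, h3, h4⟩)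
    · exact g2
    · exact absurd (h1.mpr g1) g3
    · by_contra hab
      have hbb : (b, b) ∈ R := by
        rcases h2 with ⟨-, h⟩ | ⟨hbL, -, -, -⟩
        · exact h
        · exact absurd hbL h3
      exact h4 (Or.inr ⟨h1, hbb, h3, hab⟩)
  · intro hab
    have ha : a ∈ W := (hR.1 hab).1
    have hb : b ∈ W := (hR.1 hab).2
    by_cases haL : a ∈ L <;> by_cases hbL : b ∈ L
    · exact Or.inl ⟨iff_of_true haL hbL, Or.inl ⟨iff_of_true hbL haL, hab⟩⟩
    · refine Or.inr ⟨haL, Or.inl ⟨Iff.rfl, hR.2.1 b hb⟩, hbL, ?_⟩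
      rintro (⟨i1, -⟩ | ⟨-, -, -, i4⟩)
      · exact hbL (i1.mp haL)
      · exact i4 hab
    · exact absurd (hlow a b hab hbL) haL
    · exact Or.inl ⟨iff_of_false haL hbL, Or.inl ⟨iff_of_false hbL haL, hab⟩⟩

lemma tauP_restrict {L M : Set α} {R : Set (α × α)} (hML : ∀ m ∈ M, m ∉ L) :
    restrict (tauP L R) M = dual (restrict R M) := by
  ext ⟨a, b⟩
  constructor
  · rintro ⟨(⟨h1, h2⟩ | ⟨h1, -, -, -⟩), ha, hb⟩
    · exact ⟨h2, hb, ha⟩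
    · exact absurd h1 (hML a ha)
  · rintro ⟨hba, hb, ha⟩
    exact ⟨Or.inl ⟨iff_of_false (hML a ha) (hML b hb), hba⟩, ha, hb⟩

lemma exists_rel_maxPts {V : Set α} {S : Set (α × α)} (hV : V.Finite) (hS : IsPor V S) :
    ∀ u ∈ V, ∃ m, (u, m) ∈ S ∧ m ∈ maxPts S := by
  obtain ⟨hsub, hrefl, hanti, htrans⟩ := hS
  have key : ∀ n : ℕ, ∀ u ∈ V, (up S u).ncard ≤ n → ∃ m, (u, m) ∈ S ∧ m ∈ maxPts S := by
    intro n
    induction n with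
    | zero =>
      intro u hu h0
      exfalso
      have hmem : u ∈ up S u := hrefl u hu
      have hfin : (up S u).Finite := hV.subset fun z hz => (hsub hz).2
      have := (Set.ncard_pos hfin).mpr ⟨u, hmem⟩
      omega
    | succ n ih =>
      intro u hu hcard
      by_cases hmax : up S u = {u}
      · exact ⟨u, hrefl u hu, hmax⟩
      · have hex : ∃ v ∈ up S u, v ≠ u := by
          by_contra h
          push_neg at h
          exact hmax (Set.eq_singleton_iff_unique_mem.mpr ⟨hrefl u hu, h⟩)
        obtain ⟨v, hv, hvu⟩ := hex
        have hvV : v ∈ V := (hsub hv).2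
        have hss : up S v ⊂ up S u := by
          refine ⟨fun z hz => htrans _ _ _ hv hz, fun hcon => ?_⟩
          exact hvu (hanti v u (hcon (hrefl u hu)) hv)
        have hfin : (up S u).Finite := hV.subset fun z hz => (hsub hz).2
        have hlt := Set.ncard_lt_ncard hss hfin
        obtain ⟨m, hm1, hm2⟩ := ih v hvV (by omega)
        exact ⟨m, htrans _ _ _ hv hm1, hm2⟩
  intro u hu
  exact key (up S u).ncard u hu le_rfl

lemma maxPts_mem_carrier {Q : Set (α × α)} {m : α} (hm : m ∈ maxPts Q) : (m, m) ∈ Q := by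
  have : m ∈ up Q m := by rw [show up Q m = {m} from hm]; rfl
  exact this

lemma maxPts_union_single {Z : Set α} {Q : Set (α × α)} (hQ : IsPor Z Q) {y : α}
    (hy : y ∉ Z) : maxPts (Q ∪ {(y, y)}) = maxPts Q ∪ {y} := by
  have hpair : ∀ a b : α, (a, b) ∈ ({(y, y)} : Set (α × α)) ↔ a = y ∧ b = y := by
    intro a b; rw [Set.mem_singleton_iff, Prod.ext_iff]
  ext u
  constructor
  · intro h
    have hup : up (Q ∪ {(y, y)}) u = {u} := h
    by_cases huy : u = y
    · exact Or.inr huy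
    · left
      have huu : (u, u) ∈ Q := by
        have hm : u ∈ up (Q ∪ {(y, y)}) u := by rw [hup]; rfl
        rcases hm with h' | h'
        · exact h'
        · exact absurd ((hpair u u).mp h').1 huy
      show up Q u = {u}
      apply Set.eq_singleton_iff_unique_mem.mpr
      refine ⟨huu, fun z hz => ?_⟩
      have hz' : z ∈ ({u} : Set α) := by rw [← hup]; exact Or.inl hz
      exact hz'
  · rintro (h | h)
    · have huZ : u ∈ Z := (hQ.1 (maxPts_mem_carrier h)).1
      have huy : u ≠ y := fun e => hy (e ▸ huZ)
      show up (Q ∪ {(y, y)}) u = {u}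
      apply Set.eq_singleton_iff_unique_mem.mpr
      refine ⟨Or.inl (maxPts_mem_carrier h), fun z hz => ?_⟩
      rcases hz with hz | hz
      · have hz' : z ∈ up Q u := hz
        rw [show up Q u = {u} from h] at hz'
        exact hz'
      · exact absurd ((hpair u z).mp hz).1 huy
    · have h' : u = y := h
      show up (Q ∪ {(y, y)}) u = {u}
      apply Set.eq_singleton_iff_unique_mem.mpr
      refine ⟨Or.inr ((hpair u u).mpr ⟨h', h'⟩), fun z hz => ?_⟩
      rcases hz with hz | hz
      · exact absurd (h' ▸ (hQ.1 hz).1) hy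
      · exact ((hpair u z).mp hz).2.trans h'.symm

end Stmt0Aux

section Stmt0Main

variable {α : Type*}

def psiL (y : α) (S : Set (α × α)) : Set α := {u | u ≠ y ∧ (u, y) ∈ S}

def psiMap (X Z : Set α) (y : α) (S : Set (α × α)) : Set (α × α) :=
  tauP (psiL y S) (restrict S (X ∪ Z))

def phiL (X Z : Set α) (P : Set (α × α)) : Set α := X \ upSet P Z

def phiMap (X Z : Set α) (y : α) (P : Set (α × α)) : Set (α × α) :=
  tauP (phiL X Z P) P ∪ {p | p.2 = y ∧ (p.1 ∈ phiL X Z P ∨ p.1 = y)}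

variable {X Z : Set α} {Q : Set (α × α)} {y : α}

lemma restrict_union_single (hQ : IsPor Z Q) (hy : y ∉ Z) :
    restrict (Q ∪ {(y, y)}) Z = Q := by
  ext ⟨a, b⟩
  constructor
  · rintro ⟨hq | hq, ha, hb⟩
    · exact hq
    · have : a = y := (Prod.ext_iff.mp hq).1
      exact absurd (this ▸ ha) hy
  · intro hq
    exact ⟨Or.inl hq, (hQ.1 hq).1, (hQ.1 hq).2⟩

/-- Facts extracted from membership in `NstarSet`. -/
lemma psiL_subset (hQ : IsPor Z Q) (hy : y ∉ X ∪ Z)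
    {S : Set (α × α)} (hSpor : IsPor (X ∪ (Z ∪ {y})) S)
    (hSres : restrict S (Z ∪ {y}) = Q ∪ {(y, y)}) : psiL y S ⊆ X := by
  rintro u ⟨huy, huS⟩
  rcases (hSpor.1 huS).1 with h | h | h
  · exact h
  · exfalso
    have hmem : (u, y) ∈ restrict S (Z ∪ {y}) := ⟨huS, Or.inl h, Or.inr rfl⟩
    rw [hSres] at hmem
    rcases hmem with h' | h'
    · exact hy (Or.inr (hQ.1 h').2)
    · exact huy (Prod.ext_iff.mp h').1
  · exact absurd h huy

lemma psiL_lowerEnd {S : Set (α × α)} (hSpor : IsPor (X ∪ (Z ∪ {y})) S)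
    (hy : y ∉ X ∪ Z) : IsLowerEnd (restrict S (X ∪ Z)) (psiL y S) := by
  rintro a b ⟨hab, haW, hbW⟩ ⟨hby, hbS⟩
  refine ⟨fun e => hy (e ▸ haW), hSpor.2.2.2 a b y hab hbS⟩

lemma restrictW_isPor {S : Set (α × α)} (hSpor : IsPor (X ∪ (Z ∪ {y})) S) :
    IsPor (X ∪ Z) (restrict S (X ∪ Z)) :=
  restrict_isPor hSpor (Set.union_subset_union_right X Set.subset_union_left)

lemma psi_mem (hXZ : Disjoint X Z) (hQ : IsPor Z Q) (hy : y ∉ X ∪ Z)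
    {S : Set (α × α)} (hS : S ∈ NstarSet (Q ∪ {(y, y)}) X (Z ∪ {y})) :
    psiMap X Z y S ∈ Iset (dual Q) X Z := by
  obtain ⟨⟨hSpor, hSres⟩, hSmax⟩ := hS
  have hd := Set.disjoint_left.mp hXZ
  have hyZ : y ∉ Z := fun h => hy (Or.inr h)
  have hLX : psiL y S ⊆ X := psiL_subset hQ hy hSpor hSres
  have hLW : psiL y S ⊆ X ∪ Z := fun u hu => Or.inl (hLX hu)
  refine ⟨tauP_isPor (restrictW_isPor hSpor) hLW, ?_⟩
  rw [psiMap, tauP_restrict (fun z hz hzL => hd (hLX hzL) hz),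
    restrict_restrict Set.subset_union_right]
  have hSZ : restrict S Z = Q := by
    calc restrict S Z = restrict (restrict S (Z ∪ {y})) Z :=
          (restrict_restrict Set.subset_union_left).symm
      _ = Q := by rw [hSres]; exact restrict_union_single hQ hyZ
  rw [hSZ]

lemma phiL_lowerEnd {P : Set (α × α)} (hPpor : IsPor (X ∪ Z) P) :
    IsLowerEnd P (phiL X Z P) := by
  rintro a b hab ⟨hbX, hbU⟩
  have haX : a ∈ X := by
    rcases (hPpor.1 hab).1 with h | h
    · exact h
    · exact absurd ⟨a, h, hab⟩ hbU
  exact ⟨haX, fun ⟨z, hz, hza⟩ => hbU ⟨z, hz, hPpor.2.2.2 z a b hza hab⟩⟩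

lemma phi_mem (hXZ : Disjoint X Z) (hQ : IsPor Z Q) (hy : y ∉ X ∪ Z)
    {P : Set (α × α)} (hP : P ∈ Iset (dual Q) X Z) :
    phiMap X Z y P ∈ NstarSet (Q ∪ {(y, y)}) X (Z ∪ {y}) := by
  obtain ⟨hPpor, hPres⟩ := hP
  have hd := Set.disjoint_left.mp hXZ
  have hyX : y ∉ X := fun h => hy (Or.inl h)
  have hyZ : y ∉ Z := fun h => hy (Or.inr h)
  set L := phiL X Z P with hLdef
  have hLX : L ⊆ X := Set.diff_subset
  have hLW : L ⊆ X ∪ Z := fun u hu => Or.inl (hLX hu)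
  have hlow : IsLowerEnd P L := phiL_lowerEnd hPpor
  have hS0por : IsPor (X ∪ Z) (tauP L P) := tauP_isPor hPpor hLW
  set S0 := tauP L P with hS0def
  have hS0res : restrict S0 Z = Q := by
    rw [hS0def, tauP_restrict (fun z hz hzL => hd (hLX hzL) hz), hPres, dual_dual]
  have hTsplit : ∀ a b : α, (a, b) ∈ phiMap X Z y P ↔
      (a, b) ∈ S0 ∨ (b = y ∧ (a ∈ L ∨ a = y)) := fun a b => Iff.rfl
  have hS0W : ∀ {a b : α}, (a, b) ∈ S0 → a ∈ X ∪ Z ∧ b ∈ X ∪ Z :=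
    fun hab => ⟨(hS0por.1 hab).1, (hS0por.1 hab).2⟩
  -- the poset structure
  have hTpor : IsPor (X ∪ (Z ∪ {y})) (phiMap X Z y P) := by
    refine ⟨?_, ?_, ?_, ?_⟩
    · rintro ⟨a, b⟩ hab
      rcases (hTsplit a b).mp hab with h | ⟨rfl, h⟩
      · rcases hS0W h with ⟨ha, hb⟩
        constructor
        · rcases ha with h' | h'
          · exact Or.inl h'
          · exact Or.inr (Or.inl h')
        · rcases hb with h' | h'
          · exact Or.inl h'
          · exact Or.inr (Or.inl h')
      · refine ⟨?_, Or.inr (Or.inr rfl)⟩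
        rcases h with h' | h'
        · exact Or.inl (hLX h')
        · exact Or.inr (Or.inr h')
    · intro x hx
      rcases hx with hx | hx
      · exact (hTsplit x x).mpr (Or.inl (hS0por.2.1 x (Or.inl hx)))
      · rcases hx with hx | hx
        · exact (hTsplit x x).mpr (Or.inl (hS0por.2.1 x (Or.inr hx)))
        · exact (hTsplit x x).mpr (Or.inr ⟨hx, Or.inr hx⟩)
    · intro a b hab hba
      rcases (hTsplit a b).mp hab with h1 | ⟨hby, h1⟩
      · rcases (hTsplit b a).mp hba with h2 | ⟨hay, h2⟩
        · exact hS0por.2.2.1 a b h1 h2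
        · exact absurd ((hS0W h1).1) (hay ▸ hy)
      · rcases (hTsplit b a).mp hba with h2 | ⟨hay, h2⟩
        · exact absurd ((hS0W h2).1) (hby ▸ hy)
        · rw [hay, hby]
    · intro a b c hab hbc
      rcases (hTsplit a b).mp hab with h1 | ⟨hby, h1⟩
      · rcases (hTsplit b c).mp hbc with h2 | ⟨hcy, h2⟩
        · exact (hTsplit a c).mpr (Or.inl (hS0por.2.2.2 a b c h1 h2))
        · refine (hTsplit a c).mpr (Or.inr ⟨hcy, Or.inl ?_⟩)
          have hbL : b ∈ L := by
            rcases h2 with h' | h'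
            · exact h'
            · exact absurd ((hS0W h1).2) (h' ▸ hy)
          exact tauP_lowerEnd a b h1 hbL
      · rcases (hTsplit b c).mp hbc with h2 | ⟨hcy, h2⟩
        · exact absurd ((hS0W h2).1) (hby ▸ hy)
        · exact (hTsplit a c).mpr (Or.inr ⟨hcy, h1⟩)
  -- restriction
  have hTres : restrict (phiMap X Z y P) (Z ∪ {y}) = Q ∪ {(y, y)} := by
    ext ⟨a, b⟩
    constructor
    · rintro ⟨hab, ha, hb⟩
      rcases (hTsplit a b).mp hab with h | ⟨hby, h⟩
      · have haZ : a ∈ Z := by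
          rcases ha with h' | h'
          · exact h'
          · have he : a = y := h'
            exact absurd ((hS0W h).1) (by rw [he]; exact hy)
        have hbZ : b ∈ Z := by
          rcases hb with h' | h'
          · exact h'
          · have he : b = y := h'
            exact absurd ((hS0W h).2) (by rw [he]; exact hy)
        have : (a, b) ∈ restrict S0 Z := ⟨h, haZ, hbZ⟩
        rw [hS0res] at this
        exact Or.inl this
      · have hay : a = y := by
          rcases h with h' | h'
          · rcases ha with h'' | h''
            · exact absurd (hLX h') (fun hc => hd hc h'')
            · exact h''
          · exact h'
        exact Or.inr (by rw [hay, hby]; rfl)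
    · rintro (hq | hq)
      · have : (a, b) ∈ restrict S0 Z := by rw [hS0res]; exact hq
        exact ⟨(hTsplit a b).mpr (Or.inl this.1), Or.inl this.2.1, Or.inl this.2.2⟩
      · have hay : a = y := (Prod.ext_iff.mp hq).1
        have hby : b = y := (Prod.ext_iff.mp hq).2
        exact ⟨(hTsplit a b).mpr (Or.inr ⟨hby, Or.inr hay⟩),
          Or.inr (by rw [hay]; rfl), Or.inr (by rw [hby]; rfl)⟩
  -- maximal points
  have hTmax : maxPts (phiMap X Z y P) = maxPts Q ∪ {y} := by
    ext u
    constructor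
    · intro hu
      have hup : up (phiMap X Z y P) u = {u} := hu
      by_cases huy : u = y
      · exact Or.inr huy
      · have huu : (u, u) ∈ phiMap X Z y P := by
          have : u ∈ up (phiMap X Z y P) u := by rw [hup]; rfl
          exact this
        have huV : u ∈ X ∪ (Z ∪ {y}) := (hTpor.1 huu).1
      -- u cannot be in X
        have hnX : u ∉ X := by
          intro huX
          by_cases huL : u ∈ L
          · have : (u, y) ∈ phiMap X Z y P := (hTsplit u y).mpr (Or.inr ⟨rfl, Or.inl huL⟩)
            have : y ∈ up (phiMap X Z y P) u := this
            rw [hup] at this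
            exact huy this.symm
          · have huU : u ∈ upSet P Z := by
              by_contra hc
              exact huL ⟨huX, hc⟩
            obtain ⟨z, hz, hzu⟩ := huU
            have hzL : z ∉ L := fun hc => hd (hLX hc) hz
            have : (u, z) ∈ S0 := Or.inl ⟨iff_of_false huL hzL, hzu⟩
            have : z ∈ up (phiMap X Z y P) u := (hTsplit u z).mpr (Or.inl this)
            rw [hup] at this
            exact hd huX (this ▸ hz)
        have huZ : u ∈ Z := by
          rcases huV with h | h | h
          · exact absurd h hnX
          · exact h
          · exact absurd h huy
        left
        show up Q u = {u}
        apply Set.eq_singleton_iff_unique_mem.mpr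
        refine ⟨hQ.2.1 u huZ, fun z hz => ?_⟩
        have : (u, z) ∈ S0 := by
          have : (u, z) ∈ restrict S0 Z := by rw [hS0res]; exact hz
          exact this.1
        have : z ∈ up (phiMap X Z y P) u := (hTsplit u z).mpr (Or.inl this)
        rw [hup] at this
        exact this
    · rintro (hu | hu)
      · have huZ : u ∈ Z := (hQ.1 (maxPts_mem_carrier hu)).1
        have huL : u ∉ L := fun hc => hd (hLX hc) huZ
        show up (phiMap X Z y P) u = {u}
        apply Set.eq_singleton_iff_unique_mem.mpr
        constructor
        · exact (hTsplit u u).mpr (Or.inl (hS0por.2.1 u (Or.inr huZ)))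
        · intro v hv
          rcases (hTsplit u v).mp hv with h | ⟨hvy, h⟩
          · rcases h with ⟨hiff, hvu⟩ | ⟨h', -, -, -⟩
            · rcases (hPpor.1 hvu).1 with hvX | hvZ
              · -- v ∈ X: derive contradiction
                exfalso
                have hvL : v ∉ L := fun hc => huL (hiff.mpr hc)
                have hvU : v ∈ upSet P Z := by
                  by_contra hc
                  exact hvL ⟨hvX, hc⟩
                obtain ⟨z, hz, hzv⟩ := hvU
                have hzu : (z, u) ∈ P := hPpor.2.2.2 z v u hzv hvu
                have : (z, u) ∈ restrict P Z := ⟨hzu, hz, huZ⟩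
                rw [hPres] at this
                have : z ∈ up Q u := this
                rw [show up Q u = {u} from hu] at this
                have hzz : z = u := this
                have huv : (u, v) ∈ P := hzz ▸ hzv
                exact hd hvX ((hPpor.2.2.1 v u hvu huv) ▸ huZ)
              · have : (v, u) ∈ restrict P Z := ⟨hvu, hvZ, huZ⟩
                rw [hPres] at this
                have : v ∈ up Q u := this
                rw [show up Q u = {u} from hu] at this
                exact this
            · exact absurd h' huL
          · exfalso
            rcases h with h' | h'
            · exact huL h'
            · exact hyZ (h' ▸ huZ)
      · have huy : u = y := hu
        show up (phiMap X Z y P) u = {u}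
        apply Set.eq_singleton_iff_unique_mem.mpr
        constructor
        · exact (hTsplit u u).mpr (Or.inr ⟨huy, Or.inr huy⟩)
        · intro v hv
          rcases (hTsplit u v).mp hv with h | ⟨hvy, -⟩
          · exact absurd ((hS0W h).1) (huy ▸ hy)
          · exact hvy.trans huy.symm
  exact ⟨⟨hTpor, hTres⟩, by rw [maxPts_union_single hQ hyZ, hTmax]⟩

lemma psi_phi (hXZ : Disjoint X Z) (hQ : IsPor Z Q) (hy : y ∉ X ∪ Z)
    {P : Set (α × α)} (hP : P ∈ Iset (dual Q) X Z) :
    psiMap X Z y (phiMap X Z y P) = P := by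
  obtain ⟨hPpor, hPres⟩ := hP
  have hd := Set.disjoint_left.mp hXZ
  have hyX : y ∉ X := fun h => hy (Or.inl h)
  set L := phiL X Z P with hLdef
  have hLX : L ⊆ X := Set.diff_subset
  have hLW : L ⊆ X ∪ Z := fun u hu => Or.inl (hLX hu)
  have hlow : IsLowerEnd P L := phiL_lowerEnd hPpor
  have hS0por : IsPor (X ∪ Z) (tauP L P) := tauP_isPor hPpor hLW
  have hstep1 : psiL y (phiMap X Z y P) = L := by
    ext u
    constructor
    · rintro ⟨huy, huT⟩
      rcases huT with h | ⟨-, h⟩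
      · exact absurd ((hS0por.1 h).2) hy
      · rcases h with h' | h'
        · exact h'
        · exact absurd h' huy
    · intro huL
      exact ⟨fun e => hyX (e ▸ hLX huL), Or.inr ⟨rfl, Or.inl huL⟩⟩
  have hstep2 : restrict (phiMap X Z y P) (X ∪ Z) = tauP L P := by
    ext ⟨a, b⟩
    constructor
    · rintro ⟨hab, ha, hb⟩
      rcases hab with h | ⟨hby, -⟩
      · exact h
      · exact absurd hb (hby ▸ hy)
    · intro h
      exact ⟨Or.inl h, (hS0por.1 h).1, (hS0por.1 h).2⟩
  rw [psiMap, hstep1, hstep2]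
  exact tauP_tauP hPpor hLW hlow

lemma phi_psi (hX : X.Finite) (hZ : Z.Finite) (hXZ : Disjoint X Z) (hQ : IsPor Z Q)
    (hy : y ∉ X ∪ Z) {S : Set (α × α)}
    (hS : S ∈ NstarSet (Q ∪ {(y, y)}) X (Z ∪ {y})) :
    phiMap X Z y (psiMap X Z y S) = S := by
  obtain ⟨⟨hSpor, hSres⟩, hSmax⟩ := hS
  have hd := Set.disjoint_left.mp hXZ
  have hyX : y ∉ X := fun h => hy (Or.inl h)
  have hyZ : y ∉ Z := fun h => hy (Or.inr h)
  have hmaxS : maxPts S = maxPts Q ∪ {y} := by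
    rw [← hSmax, maxPts_union_single hQ hyZ]
  set L := psiL y S with hLdef
  set P := psiMap X Z y S with hPdef
  have hLX : L ⊆ X := psiL_subset hQ hy hSpor hSres
  have hLW : L ⊆ X ∪ Z := fun u hu => Or.inl (hLX hu)
  have hWpor : IsPor (X ∪ Z) (restrict S (X ∪ Z)) := restrictW_isPor hSpor
  have hlow : IsLowerEnd (restrict S (X ∪ Z)) L := psiL_lowerEnd hSpor hy
  have hrec : phiL X Z P = L := by
    ext u
    constructor
    · rintro ⟨huX, hnup⟩
      by_contra huL
      have hV : (X ∪ (Z ∪ {y})).Finite :=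
        hX.union (hZ.union (Set.finite_singleton y))
      obtain ⟨m, hum, hmmax⟩ := exists_rel_maxPts hV hSpor u (Or.inl huX)
      rw [hmaxS] at hmmax
      rcases hmmax with hm | hm
      · have hmZ : m ∈ Z := (hQ.1 (maxPts_mem_carrier hm)).1
        apply hnup
        refine ⟨m, hmZ, ?_⟩
        exact Or.inl ⟨iff_of_false (fun hc => hd (hLX hc) hmZ) huL,
          ⟨hum, Or.inl huX, Or.inr hmZ⟩⟩
      · have hmy : m = y := hm
        exact huL ⟨fun e => hyX (e ▸ huX), hmy ▸ hum⟩
    · intro huL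
      refine ⟨hLX huL, ?_⟩
      rintro ⟨z, hz, hzP⟩
      rcases hzP with ⟨hiff, -⟩ | ⟨hzL, -, -, -⟩
      · exact hd (hLX (hiff.mpr huL)) hz
      · exact hd (hLX hzL) hz
  have hinv : tauP L P = restrict S (X ∪ Z) := by
    rw [hPdef, psiMap, ← hLdef]
    exact tauP_tauP hWpor hLW hlow
  rw [phiMap, hrec, hinv]
  ext ⟨a, b⟩
  constructor
  · rintro (⟨hab, -, -⟩ | ⟨hby, h⟩)
    · exact hab
    · have hby' : b = y := hby
      rcases h with h' | h'
      · exact hby' ▸ h'.2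
      · have hay : a = y := h'
        rw [hay, hby']
        exact hSpor.2.1 y (Or.inr (Or.inr rfl))
  · intro hab
    have ha : a ∈ X ∪ (Z ∪ {y}) := (hSpor.1 hab).1
    have hb : b ∈ X ∪ (Z ∪ {y}) := (hSpor.1 hab).2
    by_cases hbeq : b = y
    · right
      refine ⟨hbeq, ?_⟩
      by_cases haeq : a = y
      · exact Or.inr haeq
      · exact Or.inl ⟨haeq, hbeq ▸ hab⟩
    · have hbW : b ∈ X ∪ Z := by
        rcases hb with h | h | h
        · exact Or.inl h
        · exact Or.inr h
        · exact absurd h hbeq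
      by_cases haeq : a = y
      · exfalso
        have hymax : y ∈ maxPts S := by rw [hmaxS]; exact Or.inr rfl
        have : b ∈ up S y := haeq ▸ hab
        rw [show up S y = {y} from hymax] at this
        exact hbeq this
      · have haW : a ∈ X ∪ Z := by
          rcases ha with h | h | h
          · exact Or.inl h
          · exact Or.inr h
          · exact absurd h haeq
        exact Or.inl ⟨hab, haW, hbW⟩

end Stmt0Main

/-- `# 𝔑*_{Q+A_y}(X, Z ∪ {y}) = # ℑ_{Q^d}(X, Z)`. -/
theorem stmt0 {α : Type*} (X Z : Set α) (hX : X.Finite) (hZ : Z.Finite)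
    (hXZ : Disjoint X Z) (Q : Set (α × α)) (hQ : IsPor Z Q)
    (y : α) (hy : y ∉ X ∪ Z) :
    (NstarSet (Q ∪ {(y, y)}) X (Z ∪ {y})).ncard = (Iset (dual Q) X Z).ncard := by
  have hinj : Set.InjOn (psiMap X Z y) (NstarSet (Q ∪ {(y, y)}) X (Z ∪ {y})) := by
    intro S1 h1 S2 h2 heq
    rw [← phi_psi hX hZ hXZ hQ hy h1, ← phi_psi hX hZ hXZ hQ hy h2, heq]
  have himg : psiMap X Z y '' NstarSet (Q ∪ {(y, y)}) X (Z ∪ {y}) = Iset (dual Q) X Z := by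
    apply Set.Subset.antisymm
    · rintro _ ⟨S, hS, rfl⟩
      exact psi_mem hXZ hQ hy hS
    · intro P hP
      exact ⟨phiMap X Z y P, phi_mem hXZ hQ hy hP, psi_phi hXZ hQ hy hP⟩
  rw [← himg, Set.ncard_image_of_injOn hinj]

end Erne
end

section
/- Let X and Z be disjoint finite sets and let y be a point not contained in X ∪ Z. The number of partial order relations on X ∪ Z in which Z is an antichain (i.e., no two distinct elements of Z are comparable) equals the number of partial order relations R on X ∪ Z ∪ {y} in which the points of Z ∪ {y} are exactly the maximal points of R. -/
namespace Erne

variable {α : Type*}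

/-! ### Auxiliary development for `stmt1`:
an explicit bijection between the two sets of p.o.r.'s. -/

/-- Points of `X` lying strictly above some point of `Z` in `R`. -/
def Mreg (X Z : Set α) (R : Set (α × α)) : Set α :=
  {w | w ∈ X ∧ ∃ z ∈ Z, (z, w) ∈ R}

/-- The forward bijection: from p.o.r.'s on `X ∪ Z` with `Z` an antichain to
p.o.r.'s on `X ∪ Z ∪ {y}` with `Z ∪ {y}` the set of maximal points. -/
def psi (X Z : Set α) (y : α) (R : Set (α × α)) : Set (α × α) :=
  {p | (p.1 = p.2 ∧ p.1 ∈ X ∪ Z ∪ {y}) ∨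
    (p.1 ∈ X \ Mreg X Z R ∧ p.2 ∈ X \ Mreg X Z R ∧ (p.2, p.1) ∈ R) ∨
    (p.1 ∈ Mreg X Z R ∧ p.2 ∈ Mreg X Z R ∧ (p.2, p.1) ∈ R) ∨
    (p.1 ∈ X \ Mreg X Z R ∧ p.2 ∈ Mreg X Z R ∧ p ∉ R) ∨
    (p.1 ∈ X \ Mreg X Z R ∧ p.2 ∈ Z ∧ p ∉ R) ∨
    (p.1 ∈ Mreg X Z R ∧ p.2 ∈ Z ∧ (p.2, p.1) ∈ R) ∨
    (p.1 ∈ X \ Mreg X Z R ∧ p.2 = y)}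

/-- Points of `X` lying below `y` in `S`. -/
def Dreg (X : Set α) (y : α) (S : Set (α × α)) : Set α :=
  {a | a ∈ X ∧ (a, y) ∈ S}

/-- The inverse bijection. -/
def phi (X Z : Set α) (y : α) (S : Set (α × α)) : Set (α × α) :=
  {p | (p.1 = p.2 ∧ p.1 ∈ X ∪ Z) ∨
    (p.1 ∈ Dreg X y S ∧ p.2 ∈ Dreg X y S ∧ (p.2, p.1) ∈ S) ∨
    (p.1 ∈ X \ Dreg X y S ∧ p.2 ∈ X \ Dreg X y S ∧ (p.2, p.1) ∈ S) ∨
    (p.1 ∈ Dreg X y S ∧ p.2 ∈ X \ Dreg X y S ∧ p ∉ S) ∨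
    (p.1 ∈ Dreg X y S ∧ p.2 ∈ Z ∧ p ∉ S) ∨
    (p.1 ∈ Z ∧ p.2 ∈ X \ Dreg X y S ∧ (p.2, p.1) ∈ S)}

lemma mem_psi_iff {X Z : Set α} {y : α} {R : Set (α × α)} {a b : α} :
    (a, b) ∈ psi X Z y R ↔ (a = b ∧ a ∈ X ∪ Z ∪ {y}) ∨
    (a ∈ X \ Mreg X Z R ∧ b ∈ X \ Mreg X Z R ∧ (b, a) ∈ R) ∨
    (a ∈ Mreg X Z R ∧ b ∈ Mreg X Z R ∧ (b, a) ∈ R) ∨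
    (a ∈ X \ Mreg X Z R ∧ b ∈ Mreg X Z R ∧ (a, b) ∉ R) ∨
    (a ∈ X \ Mreg X Z R ∧ b ∈ Z ∧ (a, b) ∉ R) ∨
    (a ∈ Mreg X Z R ∧ b ∈ Z ∧ (b, a) ∈ R) ∨
    (a ∈ X \ Mreg X Z R ∧ b = y) := Iff.rfl

lemma mem_phi_iff {X Z : Set α} {y : α} {S : Set (α × α)} {a b : α} :
    (a, b) ∈ phi X Z y S ↔ (a = b ∧ a ∈ X ∪ Z) ∨
    (a ∈ Dreg X y S ∧ b ∈ Dreg X y S ∧ (b, a) ∈ S) ∨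
    (a ∈ X \ Dreg X y S ∧ b ∈ X \ Dreg X y S ∧ (b, a) ∈ S) ∨
    (a ∈ Dreg X y S ∧ b ∈ X \ Dreg X y S ∧ (a, b) ∉ S) ∨
    (a ∈ Dreg X y S ∧ b ∈ Z ∧ (a, b) ∉ S) ∨
    (a ∈ Z ∧ b ∈ X \ Dreg X y S ∧ (b, a) ∈ S) := Iff.rfl
section Facts

variable {X Z : Set α} {y : α}

lemma lhs_ZZ {R : Set (α × α)} (hQ : restrict R Z = diag Z) :
    ∀ a b, (a, b) ∈ R → a ∈ Z → b ∈ Z → a = b := by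
  intro a b hab ha hb
  have : (a, b) ∈ restrict R Z := ⟨hab, ha, hb⟩
  rw [hQ] at this
  exact this.1

/-- Nothing of `Mreg` lies below `Z`. -/
lemma lhs_MZ (hXZ : Disjoint X Z) {R : Set (α × α)}
    (hR : IsPor (X ∪ Z) R) (hQ : restrict R Z = diag Z) :
    ∀ a b, a ∈ Mreg X Z R → b ∈ Z → (a, b) ∈ R → False := by
  rintro a b ⟨haX, z, hz, hza⟩ hb hab
  have hzb : (z, b) ∈ R := hR.2.2.2 _ _ _ hza hab
  have hzeq : z = b := lhs_ZZ hQ _ _ hzb hz hb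
  subst hzeq
  have : a = z := hR.2.2.1 _ _ hab hza
  exact Set.disjoint_left.mp hXZ haX (this ▸ hz)

/-- `Mreg` is an upper end. -/
lemma lhs_Mup (hXZ : Disjoint X Z) {R : Set (α × α)}
    (hR : IsPor (X ∪ Z) R) (hQ : restrict R Z = diag Z) :
    ∀ a b, a ∈ Mreg X Z R → (a, b) ∈ R → b ∈ Mreg X Z R := by
  intro a b ha hab
  rcases (hR.1 hab).2 with hbX | hbZ
  · obtain ⟨haX, z, hz, hza⟩ := ha
    exact ⟨hbX, z, hz, hR.2.2.2 _ _ _ hza hab⟩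
  · exact absurd hab (fun h => lhs_MZ hXZ hR hQ a b ha hbZ h)

/-- `X \ Mreg` is a lower end. -/
lemma lhs_Dlow (hXZ : Disjoint X Z) {R : Set (α × α)}
    (hR : IsPor (X ∪ Z) R) (hQ : restrict R Z = diag Z) :
    ∀ a b, (a, b) ∈ R → b ∈ X \ Mreg X Z R → a ∈ X \ Mreg X Z R := by
  intro a b hab hb
  rcases (hR.1 hab).1 with haX | haZ
  · exact ⟨haX, fun haM => hb.2 (lhs_Mup hXZ hR hQ a b haM hab)⟩
  · exact absurd (⟨hb.1, a, haZ, hab⟩ : b ∈ Mreg X Z R) hb.2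

end Facts
lemma psi_isPor {X Z : Set α} {y : α} (hXZ : Disjoint X Z) (hy : y ∉ X ∪ Z)
    {R : Set (α × α)} (hR : IsPor (X ∪ Z) R) (hQ : restrict R Z = diag Z) :
    IsPor (X ∪ Z ∪ {y}) (psi X Z y R) := by
  have htr := hR.2.2.2
  have han := hR.2.2.1
  have hXy : ∀ {t : α}, t ∈ X → t ∈ X ∪ Z ∪ {y} := fun h => Or.inl (Or.inl h)
  have hZy : ∀ {t : α}, t ∈ Z → t ∈ X ∪ Z ∪ {y} := fun h => Or.inl (Or.inr h)
  have hyV : y ∈ X ∪ Z ∪ {y} := Or.inr rfl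
  have hdj : ∀ {t : α}, t ∈ X → t ∈ Z → False := fun h1 h2 =>
    Set.disjoint_left.mp hXZ h1 h2
  have hyX : ∀ {t : α}, t ∈ X → t = y → False := fun h1 h2 => hy (Or.inl (h2 ▸ h1))
  refine ⟨?_, ?_, ?_, ?_⟩
  · -- subset
    rintro ⟨a, b⟩ h
    rcases mem_psi_iff.mp h with ⟨rfl, hv⟩ | ⟨ha, hb, _⟩ | ⟨ha, hb, _⟩ | ⟨ha, hb, _⟩ |
      ⟨ha, hb, _⟩ | ⟨ha, hb, _⟩ | ⟨ha, rfl⟩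
    · exact Set.mk_mem_prod hv hv
    · exact Set.mk_mem_prod (hXy ha.1) (hXy hb.1)
    · exact Set.mk_mem_prod (hXy ha.1) (hXy hb.1)
    · exact Set.mk_mem_prod (hXy ha.1) (hXy hb.1)
    · exact Set.mk_mem_prod (hXy ha.1) (hZy hb)
    · exact Set.mk_mem_prod (hXy ha.1) (hZy hb)
    · exact Set.mk_mem_prod (hXy ha.1) hyV
  · -- reflexive
    exact fun x hx => mem_psi_iff.mpr (Or.inl ⟨rfl, hx⟩)
  · -- antisymmetric
    intro a b hab hba
    rcases mem_psi_iff.mp hab with ⟨rfl, _⟩ | ⟨ha, hb, hr⟩ | ⟨ha, hb, hr⟩ | ⟨ha, hb, hr⟩ |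
      ⟨ha, hb, hr⟩ | ⟨ha, hb, hr⟩ | ⟨ha, rfl⟩
    · rfl
    · rcases mem_psi_iff.mp hba with ⟨rfl, _⟩ | ⟨_, _, hr'⟩ | ⟨hb', _, _⟩ | ⟨_, ha', _⟩ |
        ⟨_, haZ, _⟩ | ⟨hb', _, _⟩ | ⟨_, h⟩
      · rfl
      · exact han _ _ hr' hr
      · exact absurd hb' hb.2
      · exact absurd ha' ha.2
      · exact absurd haZ (hdj ha.1)
      · exact absurd hb' hb.2
      · exact absurd h (fun h' => hyX ha.1 h')
    · rcases mem_psi_iff.mp hba with ⟨rfl, _⟩ | ⟨hb', _, _⟩ | ⟨_, _, hr'⟩ | ⟨hb', _, _⟩ |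
        ⟨hb', _, _⟩ | ⟨_, haZ, _⟩ | ⟨hb', _⟩
      · rfl
      · exact absurd hb hb'.2
      · exact han _ _ hr' hr
      · exact absurd hb hb'.2
      · exact absurd hb hb'.2
      · exact absurd haZ (hdj ha.1)
      · exact absurd hb hb'.2
    · rcases mem_psi_iff.mp hba with ⟨rfl, _⟩ | ⟨hb', _, _⟩ | ⟨_, ha', _⟩ | ⟨hb', _, _⟩ |
        ⟨hb', _, _⟩ | ⟨_, haZ, _⟩ | ⟨hb', _⟩
      · rfl
      · exact absurd hb hb'.2
      · exact absurd ha' ha.2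
      · exact absurd hb hb'.2
      · exact absurd hb hb'.2
      · exact absurd haZ (hdj ha.1)
      · exact absurd hb hb'.2
    · rcases mem_psi_iff.mp hba with ⟨rfl, _⟩ | ⟨hb', _, _⟩ | ⟨hb', _, _⟩ | ⟨hb', _, _⟩ |
        ⟨hb', _, _⟩ | ⟨hb', _, _⟩ | ⟨hb', _⟩
      · rfl
      · exact absurd hb (hdj hb'.1)
      · exact absurd hb (hdj hb'.1)
      · exact absurd hb (hdj hb'.1)
      · exact absurd hb (hdj hb'.1)
      · exact absurd hb (hdj hb'.1)
      · exact absurd hb (hdj hb'.1)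
    · rcases mem_psi_iff.mp hba with ⟨rfl, _⟩ | ⟨hb', _, _⟩ | ⟨hb', _, _⟩ | ⟨hb', _, _⟩ |
        ⟨hb', _, _⟩ | ⟨hb', _, _⟩ | ⟨hb', _⟩
      · rfl
      · exact absurd hb (hdj hb'.1)
      · exact absurd hb (hdj hb'.1)
      · exact absurd hb (hdj hb'.1)
      · exact absurd hb (hdj hb'.1)
      · exact absurd hb (hdj hb'.1)
      · exact absurd hb (hdj hb'.1)
    · rcases mem_psi_iff.mp hba with ⟨rfl, _⟩ | ⟨hb', _, _⟩ | ⟨hb', _, _⟩ | ⟨hb', _, _⟩ |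
        ⟨hb', _, _⟩ | ⟨hb', _, _⟩ | ⟨hb', _⟩
      · rfl
      · exact absurd rfl (fun h => hyX hb'.1 h)
      · exact absurd rfl (fun h => hyX hb'.1 h)
      · exact absurd rfl (fun h => hyX hb'.1 h)
      · exact absurd rfl (fun h => hyX hb'.1 h)
      · exact absurd rfl (fun h => hyX hb'.1 h)
      · exact absurd rfl (fun h => hyX hb'.1 h)
  · -- transitive
    intro a b c hab hbc
    rcases mem_psi_iff.mp hab with ⟨rfl, _⟩ | ⟨ha, hb, hr⟩ | ⟨ha, hb, hr⟩ | ⟨ha, hb, hr⟩ |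
      ⟨ha, hb, hr⟩ | ⟨ha, hb, hr⟩ | ⟨ha, rfl⟩
    · exact hbc
    · -- D → D
      rcases mem_psi_iff.mp hbc with ⟨rfl, _⟩ | ⟨_, hc, hr'⟩ | ⟨hb', _, _⟩ | ⟨_, hc, hnr⟩ |
        ⟨_, hc, hnr⟩ | ⟨hb', _, _⟩ | ⟨_, rfl⟩
      · exact mem_psi_iff.mpr (Or.inr (Or.inl ⟨ha, hb, hr⟩))
      · exact mem_psi_iff.mpr (Or.inr (Or.inl ⟨ha, hc, htr _ _ _ hr' hr⟩))
      · exact absurd hb' hb.2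
      · exact mem_psi_iff.mpr (Or.inr (Or.inr (Or.inr (Or.inl
          ⟨ha, hc, fun hac => hnr (htr _ _ _ hr hac)⟩))))
      · exact mem_psi_iff.mpr (Or.inr (Or.inr (Or.inr (Or.inr (Or.inl
          ⟨ha, hc, fun hac => hnr (htr _ _ _ hr hac)⟩)))))
      · exact absurd hb' hb.2
      · exact mem_psi_iff.mpr (Or.inr (Or.inr (Or.inr (Or.inr (Or.inr (Or.inr ⟨ha, rfl⟩))))))
    · -- M → M
      rcases mem_psi_iff.mp hbc with ⟨rfl, _⟩ | ⟨hb', _, _⟩ | ⟨_, hc, hr'⟩ | ⟨hb', _, _⟩ |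
        ⟨hb', _, _⟩ | ⟨_, hc, hr'⟩ | ⟨hb', _⟩
      · exact mem_psi_iff.mpr (Or.inr (Or.inr (Or.inl ⟨ha, hb, hr⟩)))
      · exact absurd hb hb'.2
      · exact mem_psi_iff.mpr (Or.inr (Or.inr (Or.inl ⟨ha, hc, htr _ _ _ hr' hr⟩)))
      · exact absurd hb hb'.2
      · exact absurd hb hb'.2
      · exact mem_psi_iff.mpr (Or.inr (Or.inr (Or.inr (Or.inr (Or.inr (Or.inl
          ⟨ha, hc, htr _ _ _ hr' hr⟩))))))
      · exact absurd hb hb'.2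
    · -- D → M
      rcases mem_psi_iff.mp hbc with ⟨rfl, _⟩ | ⟨hb', _, _⟩ | ⟨_, hc, hr'⟩ | ⟨hb', _, _⟩ |
        ⟨hb', _, _⟩ | ⟨_, hc, hr'⟩ | ⟨hb', _⟩
      · exact mem_psi_iff.mpr (Or.inr (Or.inr (Or.inr (Or.inl ⟨ha, hb, hr⟩))))
      · exact absurd hb hb'.2
      · exact mem_psi_iff.mpr (Or.inr (Or.inr (Or.inr (Or.inl
          ⟨ha, hc, fun hac => hr (htr _ _ _ hac hr')⟩))))
      · exact absurd hb hb'.2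
      · exact absurd hb hb'.2
      · exact mem_psi_iff.mpr (Or.inr (Or.inr (Or.inr (Or.inr (Or.inl
          ⟨ha, hc, fun hac => hr (htr _ _ _ hac hr')⟩)))))
      · exact absurd hb hb'.2
    · -- D → Z
      rcases mem_psi_iff.mp hbc with ⟨rfl, _⟩ | ⟨hb', _, _⟩ | ⟨hb', _, _⟩ | ⟨hb', _, _⟩ |
        ⟨hb', _, _⟩ | ⟨hb', _, _⟩ | ⟨hb', _⟩
      · exact mem_psi_iff.mpr (Or.inr (Or.inr (Or.inr (Or.inr (Or.inl ⟨ha, hb, hr⟩)))))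
      · exact absurd hb (hdj hb'.1)
      · exact absurd hb (hdj hb'.1)
      · exact absurd hb (hdj hb'.1)
      · exact absurd hb (hdj hb'.1)
      · exact absurd hb (hdj hb'.1)
      · exact absurd hb (hdj hb'.1)
    · -- M → Z
      rcases mem_psi_iff.mp hbc with ⟨rfl, _⟩ | ⟨hb', _, _⟩ | ⟨hb', _, _⟩ | ⟨hb', _, _⟩ |
        ⟨hb', _, _⟩ | ⟨hb', _, _⟩ | ⟨hb', _⟩
      · exact mem_psi_iff.mpr (Or.inr (Or.inr (Or.inr (Or.inr (Or.inr (Or.inl ⟨ha, hb, hr⟩))))))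
      · exact absurd hb (hdj hb'.1)
      · exact absurd hb (hdj hb'.1)
      · exact absurd hb (hdj hb'.1)
      · exact absurd hb (hdj hb'.1)
      · exact absurd hb (hdj hb'.1)
      · exact absurd hb (hdj hb'.1)
    · -- D → y
      rcases mem_psi_iff.mp hbc with ⟨rfl, _⟩ | ⟨hb', _, _⟩ | ⟨hb', _, _⟩ | ⟨hb', _, _⟩ |
        ⟨hb', _, _⟩ | ⟨hb', _, _⟩ | ⟨hb', _⟩
      · exact mem_psi_iff.mpr (Or.inr (Or.inr (Or.inr (Or.inr (Or.inr (Or.inr ⟨ha, rfl⟩))))))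
      · exact absurd rfl (fun h => hyX hb'.1 h)
      · exact absurd rfl (fun h => hyX hb'.1 h)
      · exact absurd rfl (fun h => hyX hb'.1 h)
      · exact absurd rfl (fun h => hyX hb'.1 h)
      · exact absurd rfl (fun h => hyX hb'.1 h)
      · exact absurd rfl (fun h => hyX hb'.1 h)
lemma psi_max {X Z : Set α} {y : α} (hXZ : Disjoint X Z) (hy : y ∉ X ∪ Z)
    {R : Set (α × α)} (hR : IsPor (X ∪ Z) R) :
    maxPts (psi X Z y R) = Z ∪ {y} := by
  have hdj : ∀ {t : α}, t ∈ X → t ∈ Z → False := fun h1 h2 =>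
    Set.disjoint_left.mp hXZ h1 h2
  have hyX : ∀ {t : α}, t ∈ X → t = y → False := fun h1 h2 => hy (Or.inl (h2 ▸ h1))
  ext x
  simp only [maxPts, Set.mem_setOf_eq]
  constructor
  · intro hmax
    by_contra hx
    have hxZ : x ∉ Z := fun h => hx (Or.inl h)
    have hxy : x ≠ y := fun h => hx (Or.inr h)
    have hxx : (x, x) ∈ psi X Z y R := by
      have h1 : x ∈ ({x} : Set α) := rfl
      rw [← hmax] at h1
      exact h1
    have hxX : x ∈ X := by
      rcases mem_psi_iff.mp hxx with ⟨_, hv⟩ | h | h | h | h | h | h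
      · rcases hv with (h | h) | h
        · exact h
        · exact absurd h hxZ
        · exact absurd h hxy
      all_goals exact h.1.1
    by_cases hxM : x ∈ Mreg X Z R
    · obtain ⟨_, z, hz, hzx⟩ := hxM
      have hmem : z ∈ up (psi X Z y R) x :=
        mem_psi_iff.mpr (Or.inr (Or.inr (Or.inr (Or.inr (Or.inr (Or.inl
          ⟨⟨hxX, z, hz, hzx⟩, hz, hzx⟩))))))
      rw [hmax] at hmem
      exact hdj hxX (hmem ▸ hz)
    · have hmem : y ∈ up (psi X Z y R) x :=
        mem_psi_iff.mpr (Or.inr (Or.inr (Or.inr (Or.inr (Or.inr (Or.inr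
          ⟨⟨hxX, hxM⟩, rfl⟩))))))
      rw [hmax] at hmem
      exact hxy hmem.symm
  · intro hx
    have hxX : x ∉ X := by
      rcases hx with h | h
      · exact fun h' => hdj h' h
      · exact fun h' => hyX h' h
    ext c
    constructor
    · intro hc
      rcases mem_psi_iff.mp hc with ⟨h1, _⟩ | h | h | h | h | h | h
      · exact h1.symm
      all_goals exact absurd h.1.1 hxX
    · intro hc
      have : c = x := hc
      subst this
      refine mem_psi_iff.mpr (Or.inl ⟨rfl, ?_⟩)
      rcases hx with h | h
      · exact Or.inl (Or.inr h)
      · exact Or.inr h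

lemma psi_Dreg {X Z : Set α} {y : α} (hy : y ∉ X ∪ Z) {R : Set (α × α)} :
    Dreg X y (psi X Z y R) = X \ Mreg X Z R := by
  ext a
  constructor
  · rintro ⟨haX, hay⟩
    rcases mem_psi_iff.mp hay with ⟨h1, _⟩ | h | h | h | h | h | h
    · exact absurd (h1 ▸ haX) (fun h' => hy (Or.inl h'))
    · exact absurd h.2.1.1 (fun h' => hy (Or.inl h'))
    · exact absurd h.2.1.1 (fun h' => hy (Or.inl h'))
    · exact absurd h.2.1.1 (fun h' => hy (Or.inl h'))
    · exact absurd h.2.1 (fun h' => hy (Or.inr h'))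
    · exact absurd h.2.1 (fun h' => hy (Or.inr h'))
    · exact h.1
  · intro haD
    exact ⟨haD.1, mem_psi_iff.mpr (Or.inr (Or.inr (Or.inr (Or.inr (Or.inr (Or.inr
      ⟨haD, rfl⟩))))))⟩

lemma phi_psi_s1 {X Z : Set α} {y : α} (hXZ : Disjoint X Z) (hy : y ∉ X ∪ Z)
    {R : Set (α × α)} (hR : IsPor (X ∪ Z) R) (hQ : restrict R Z = diag Z) :
    phi X Z y (psi X Z y R) = R := by
  have hdj : ∀ {t : α}, t ∈ X → t ∈ Z → False := fun h1 h2 =>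
    Set.disjoint_left.mp hXZ h1 h2
  have hyX : ∀ {t : α}, t ∈ X → t = y → False := fun h1 h2 => hy (Or.inl (h2 ▸ h1))
  have hyZ : ∀ {t : α}, t ∈ Z → t = y → False := fun h1 h2 => hy (Or.inr (h2 ▸ h1))
  have hMX : Mreg X Z R ⊆ X := fun w hw => hw.1
  have hDD : X \ (X \ Mreg X Z R) = Mreg X Z R := Set.diff_diff_cancel_left hMX
  ext ⟨a, b⟩
  rw [mem_phi_iff, psi_Dreg hy, hDD]
  constructor
  · rintro (⟨rfl, hv⟩ | ⟨ha, hb, hr⟩ | ⟨ha, hb, hr⟩ | ⟨ha, hb, hnr⟩ | ⟨ha, hb, hnr⟩ |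
      ⟨ha, hb, hr⟩)
    · exact hR.2.1 a hv
    · -- a, b ∈ D, (b,a) ∈ psi
      rcases mem_psi_iff.mp hr with ⟨h1, _⟩ | ⟨_, _, hr'⟩ | ⟨h, _, _⟩ | ⟨_, h, _⟩ |
        ⟨_, h, _⟩ | ⟨h, _, _⟩ | ⟨_, h⟩
      · subst h1
        exact hR.2.1 b (Or.inl hb.1)
      · exact hr'
      · exact absurd h hb.2
      · exact absurd h ha.2
      · exact absurd ha.1 (fun h' => hdj h' h)
      · exact absurd h hb.2
      · exact absurd h (fun h' => hyX ha.1 h')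
    · -- a, b ∈ M, (b,a) ∈ psi
      rcases mem_psi_iff.mp hr with ⟨h1, _⟩ | ⟨h, _, _⟩ | ⟨_, _, hr'⟩ | ⟨h, _, _⟩ |
        ⟨h, _, _⟩ | ⟨_, h, _⟩ | ⟨h, _⟩
      · subst h1
        exact hR.2.1 b (Or.inl hb.1)
      · exact absurd hb h.2
      · exact hr'
      · exact absurd hb h.2
      · exact absurd hb h.2
      · exact absurd ha.1 (fun h' => hdj h' h)
      · exact absurd hb h.2
    · -- a ∈ D, b ∈ M, (a,b) ∉ psi
      by_contra hnot
      exact hnr (mem_psi_iff.mpr (Or.inr (Or.inr (Or.inr (Or.inl ⟨ha, hb, hnot⟩)))))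
    · -- a ∈ D, b ∈ Z, (a,b) ∉ psi
      by_contra hnot
      exact hnr (mem_psi_iff.mpr (Or.inr (Or.inr (Or.inr (Or.inr (Or.inl ⟨ha, hb, hnot⟩))))))
    · -- a ∈ Z, b ∈ M, (b,a) ∈ psi
      rcases mem_psi_iff.mp hr with ⟨h1, _⟩ | ⟨h, _, _⟩ | ⟨_, h, _⟩ | ⟨_, h, _⟩ |
        ⟨h2, _, hnr⟩ | ⟨_, _, hr'⟩ | ⟨_, h⟩
      · exact absurd ha (fun h' => hdj (h1 ▸ hb.1) h')
      · exact absurd hb h.2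
      · exact absurd ha (fun h' => hdj h.1 h')
      · exact absurd ha (fun h' => hdj h.1 h')
      · exact absurd hb h2.2
      · exact hr'
      · exact absurd h (fun h' => hyZ ha h')
  · intro hr
    have haV := (hR.1 hr).1
    have hbV := (hR.1 hr).2
    by_cases hab : a = b
    · exact Or.inl ⟨hab, haV⟩
    rcases haV with haX | haZ
    · rcases hbV with hbX | hbZ
      · by_cases hbM : b ∈ Mreg X Z R
        · by_cases haM : a ∈ Mreg X Z R
          · exact Or.inr (Or.inr (Or.inl ⟨haM, hbM,
              mem_psi_iff.mpr (Or.inr (Or.inr (Or.inl ⟨hbM, haM, hr⟩)))⟩))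
          · refine Or.inr (Or.inr (Or.inr (Or.inl ⟨⟨haX, haM⟩, hbM, ?_⟩)))
            intro hmem
            rcases mem_psi_iff.mp hmem with ⟨h1, _⟩ | ⟨_, h, _⟩ | ⟨h, _, _⟩ |
              ⟨_, _, hnr⟩ | ⟨_, h, _⟩ | ⟨h, _, _⟩ | ⟨_, h⟩
            · exact hab h1
            · exact h.2 hbM
            · exact haM h
            · exact hnr hr
            · exact hdj hbX h
            · exact haM h
            · exact hyX hbX h
        · have haD : a ∈ X \ Mreg X Z R :=
            lhs_Dlow hXZ hR hQ a b hr ⟨hbX, hbM⟩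
          exact Or.inr (Or.inl ⟨haD, ⟨hbX, hbM⟩,
            mem_psi_iff.mpr (Or.inr (Or.inl ⟨⟨hbX, hbM⟩, haD, hr⟩))⟩)
      · by_cases haM : a ∈ Mreg X Z R
        · exact absurd hr (fun h => lhs_MZ hXZ hR hQ a b haM hbZ h)
        · refine Or.inr (Or.inr (Or.inr (Or.inr (Or.inl ⟨⟨haX, haM⟩, hbZ, ?_⟩))))
          intro hmem
          rcases mem_psi_iff.mp hmem with ⟨h1, _⟩ | ⟨_, h, _⟩ | ⟨h, _, _⟩ |
            ⟨_, h, _⟩ | ⟨_, _, hnr⟩ | ⟨h, _, _⟩ | ⟨_, h⟩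
          · exact hdj (h1 ▸ haX) hbZ
          · exact hdj h.1 hbZ
          · exact haM h
          · exact hdj h.1 hbZ
          · exact hnr hr
          · exact haM h
          · exact hyZ hbZ h
    · rcases hbV with hbX | hbZ
      · have hbM : b ∈ Mreg X Z R := ⟨hbX, a, haZ, hr⟩
        exact Or.inr (Or.inr (Or.inr (Or.inr (Or.inr ⟨haZ, hbM,
          mem_psi_iff.mpr (Or.inr (Or.inr (Or.inr (Or.inr (Or.inr (Or.inl
            ⟨hbM, haZ, hr⟩))))))⟩))))
      · exact absurd (lhs_ZZ hQ a b hr haZ hbZ) hab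
lemma exists_max_above {V : Set α} (hV : V.Finite) {S : Set (α × α)}
    (hS : IsPor V S) : ∀ x ∈ V, ∃ m ∈ maxPts S, (x, m) ∈ S := by
  have hsub : ∀ t : α, up S t ⊆ V := fun t c hc => (hS.1 hc).2
  suffices h : ∀ n, ∀ x ∈ V, (up S x).ncard ≤ n → ∃ m ∈ maxPts S, (x, m) ∈ S by
    intro x hx
    exact h (up S x).ncard x hx le_rfl
  intro n
  induction n with
  | zero =>
    intro x hx h0
    have hxup : x ∈ up S x := hS.2.1 x hx
    have hfin : (up S x).Finite := hV.subset (hsub x)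
    have := (Set.ncard_pos hfin).mpr ⟨x, hxup⟩
    omega
  | succ n ih =>
    intro x hx hn
    by_cases hmax : up S x = {x}
    · exact ⟨x, hmax, hS.2.1 x hx⟩
    · have hxup : x ∈ up S x := hS.2.1 x hx
      have hex : ∃ c ∈ up S x, c ≠ x := by
        by_contra hcon
        push_neg at hcon
        apply hmax
        apply Set.Subset.antisymm
        · intro c hc
          exact hcon c hc
        · intro c hc
          have hcx : c = x := hc
          rw [hcx]
          exact hxup
      obtain ⟨c, hc, hcx⟩ := hex
      have hcV : c ∈ V := hsub x hc
      have hsub2 : up S c ⊆ up S x := fun e he => hS.2.2.2 x c e hc he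
      have hxnot : x ∉ up S c := fun hxc => hcx (hS.2.2.1 x c hc hxc).symm
      have hfin : (up S x).Finite := hV.subset (hsub x)
      have hlt : (up S c).ncard < (up S x).ncard :=
        Set.ncard_lt_ncard ((Set.ssubset_iff_of_subset hsub2).mpr ⟨x, hxup, hxnot⟩) hfin
      obtain ⟨m, hm1, hm2⟩ := ih c hcV (by omega)
      exact ⟨m, hm1, hS.2.2.2 x c m hc hm2⟩

section Sside

variable {X Z : Set α} {y : α}

lemma rhs_max {S : Set (α × α)} (hmax : maxPts S = Z ∪ {y}) :
    ∀ ζ c, ζ ∈ Z ∪ {y} → (ζ, c) ∈ S → c = ζ := by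
  intro ζ c hζ hc
  rw [← hmax] at hζ
  have h2 : up S ζ = {ζ} := hζ
  have hcup : c ∈ up S ζ := hc
  rw [h2] at hcup
  exact hcup

lemma rhs_cover (hX : X.Finite) (hZ : Z.Finite) {S : Set (α × α)}
    (hS : IsPor (X ∪ Z ∪ {y}) S) (hmax : maxPts S = Z ∪ {y}) :
    ∀ w ∈ X \ Dreg X y S, ∃ z ∈ Z, (w, z) ∈ S := by
  intro w hw
  have hV : (X ∪ Z ∪ {y}).Finite := (hX.union hZ).union (Set.finite_singleton y)
  obtain ⟨m, hm1, hm2⟩ := exists_max_above hV hS w (Or.inl (Or.inl hw.1))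
  rw [hmax] at hm1
  rcases hm1 with hmZ | hmy
  · exact ⟨m, hmZ, hm2⟩
  · exact absurd (⟨hw.1, hmy ▸ hm2⟩ : w ∈ Dreg X y S) hw.2

lemma phi_Mreg (hX : X.Finite) (hZ : Z.Finite) (hXZ : Disjoint X Z)
    {S : Set (α × α)} (hS : IsPor (X ∪ Z ∪ {y}) S) (hmax : maxPts S = Z ∪ {y}) :
    Mreg X Z (phi X Z y S) = X \ Dreg X y S := by
  have hdj : ∀ {t : α}, t ∈ X → t ∈ Z → False := fun h1 h2 =>
    Set.disjoint_left.mp hXZ h1 h2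
  ext w
  constructor
  · rintro ⟨hwX, z, hz, hzw⟩
    rcases mem_phi_iff.mp hzw with ⟨h1, _⟩ | ⟨h, _, _⟩ | ⟨h, _, _⟩ | ⟨h, _, _⟩ |
      ⟨h, _, _⟩ | ⟨_, h, _⟩
    · exact absurd (h1 ▸ hz) (fun h' => hdj hwX h')
    · exact absurd hz (fun h' => hdj h.1 h')
    · exact absurd hz (fun h' => hdj h.1 h')
    · exact absurd hz (fun h' => hdj h.1 h')
    · exact absurd hz (fun h' => hdj h.1 h')
    · exact h
  · intro hw
    obtain ⟨z, hz, hwz⟩ := rhs_cover hX hZ hS hmax w hw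
    exact ⟨hw.1, z, hz, mem_phi_iff.mpr (Or.inr (Or.inr (Or.inr (Or.inr (Or.inr
      ⟨hz, hw, hwz⟩)))))⟩

lemma phi_isPor (hXZ : Disjoint X Z) (hy : y ∉ X ∪ Z)
    {S : Set (α × α)} (hS : IsPor (X ∪ Z ∪ {y}) S) :
    IsPor (X ∪ Z) (phi X Z y S) := by
  have htr := hS.2.2.2
  have han := hS.2.2.1
  have hdj : ∀ {t : α}, t ∈ X → t ∈ Z → False := fun h1 h2 =>
    Set.disjoint_left.mp hXZ h1 h2
  refine ⟨?_, ?_, ?_, ?_⟩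
  · rintro ⟨a, b⟩ h
    rcases mem_phi_iff.mp h with ⟨rfl, hv⟩ | ⟨ha, hb, _⟩ | ⟨ha, hb, _⟩ | ⟨ha, hb, _⟩ |
      ⟨ha, hb, _⟩ | ⟨ha, hb, _⟩
    · exact Set.mk_mem_prod hv hv
    · exact Set.mk_mem_prod (Or.inl ha.1) (Or.inl hb.1)
    · exact Set.mk_mem_prod (Or.inl ha.1) (Or.inl hb.1)
    · exact Set.mk_mem_prod (Or.inl ha.1) (Or.inl hb.1)
    · exact Set.mk_mem_prod (Or.inl ha.1) (Or.inr hb)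
    · exact Set.mk_mem_prod (Or.inr ha) (Or.inl hb.1)
  · exact fun x hx => mem_phi_iff.mpr (Or.inl ⟨rfl, hx⟩)
  · intro a b hab hba
    rcases mem_phi_iff.mp hab with ⟨rfl, _⟩ | ⟨ha, hb, hr⟩ | ⟨ha, hb, hr⟩ | ⟨ha, hb, hr⟩ |
      ⟨ha, hb, hr⟩ | ⟨ha, hb, hr⟩
    · rfl
    · rcases mem_phi_iff.mp hba with ⟨rfl, _⟩ | ⟨_, _, hr'⟩ | ⟨hb', _, _⟩ | ⟨_, ha', _⟩ |
        ⟨_, haZ, _⟩ | ⟨hbZ, _, _⟩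
      · rfl
      · exact han _ _ hr' hr
      · exact absurd hb hb'.2
      · exact absurd ha ha'.2
      · exact absurd haZ (fun h' => hdj ha.1 h')
      · exact absurd hbZ (fun h' => hdj hb.1 h')
    · rcases mem_phi_iff.mp hba with ⟨rfl, _⟩ | ⟨hb', _, _⟩ | ⟨_, _, hr'⟩ | ⟨hb', _, _⟩ |
        ⟨hb', _, _⟩ | ⟨hbZ, _, _⟩
      · rfl
      · exact absurd hb' hb.2
      · exact han _ _ hr' hr
      · exact absurd hb' hb.2
      · exact absurd hb' hb.2
      · exact absurd hbZ (fun h' => hdj hb.1 h')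
    · rcases mem_phi_iff.mp hba with ⟨rfl, _⟩ | ⟨hb', _, _⟩ | ⟨_, ha', _⟩ | ⟨hb', _, _⟩ |
        ⟨hb', _, _⟩ | ⟨hbZ, _, _⟩
      · rfl
      · exact absurd hb' hb.2
      · exact absurd ha ha'.2
      · exact absurd hb' hb.2
      · exact absurd hb' hb.2
      · exact absurd hbZ (fun h' => hdj hb.1 h')
    · rcases mem_phi_iff.mp hba with ⟨rfl, _⟩ | ⟨hb', _, _⟩ | ⟨hb', _, _⟩ | ⟨hb', _, _⟩ |
        ⟨hb', _, _⟩ | ⟨_, ha', _⟩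
      · rfl
      · exact absurd hb (fun h' => hdj hb'.1 h')
      · exact absurd hb (fun h' => hdj hb'.1 h')
      · exact absurd hb (fun h' => hdj hb'.1 h')
      · exact absurd hb (fun h' => hdj hb'.1 h')
      · exact absurd ha ha'.2
    · rcases mem_phi_iff.mp hba with ⟨rfl, _⟩ | ⟨hb', _, _⟩ | ⟨_, ha', _⟩ | ⟨hb', _, _⟩ |
        ⟨hb', _, _⟩ | ⟨hbZ, _, _⟩
      · rfl
      · exact absurd hb' hb.2
      · exact absurd ha (fun h' => hdj ha'.1 h')
      · exact absurd hb' hb.2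
      · exact absurd hb' hb.2
      · exact absurd hbZ (fun h' => hdj hb.1 h')
  · intro a b c hab hbc
    rcases mem_phi_iff.mp hab with ⟨rfl, _⟩ | ⟨ha, hb, hr⟩ | ⟨ha, hb, hr⟩ | ⟨ha, hb, hr⟩ |
      ⟨ha, hb, hr⟩ | ⟨ha, hb, hr⟩
    · exact hbc
    · -- D' → D'
      rcases mem_phi_iff.mp hbc with ⟨rfl, _⟩ | ⟨_, hc, hr'⟩ | ⟨hb', _, _⟩ | ⟨_, hc, hnr⟩ |
        ⟨_, hc, hnr⟩ | ⟨hbZ, _, _⟩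
      · exact mem_phi_iff.mpr (Or.inr (Or.inl ⟨ha, hb, hr⟩))
      · exact mem_phi_iff.mpr (Or.inr (Or.inl ⟨ha, hc, htr _ _ _ hr' hr⟩))
      · exact absurd hb hb'.2
      · exact mem_phi_iff.mpr (Or.inr (Or.inr (Or.inr (Or.inl
          ⟨ha, hc, fun hac => hnr (htr _ _ _ hr hac)⟩))))
      · exact mem_phi_iff.mpr (Or.inr (Or.inr (Or.inr (Or.inr (Or.inl
          ⟨ha, hc, fun hac => hnr (htr _ _ _ hr hac)⟩)))))
      · exact absurd hbZ (fun h' => hdj hb.1 h')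
    · -- M' → M'
      rcases mem_phi_iff.mp hbc with ⟨rfl, _⟩ | ⟨hb', _, _⟩ | ⟨_, hc, hr'⟩ | ⟨hb', _, _⟩ |
        ⟨hb', _, _⟩ | ⟨hbZ, _, _⟩
      · exact mem_phi_iff.mpr (Or.inr (Or.inr (Or.inl ⟨ha, hb, hr⟩)))
      · exact absurd hb' hb.2
      · exact mem_phi_iff.mpr (Or.inr (Or.inr (Or.inl ⟨ha, hc, htr _ _ _ hr' hr⟩)))
      · exact absurd hb' hb.2
      · exact absurd hb' hb.2
      · exact absurd hbZ (fun h' => hdj hb.1 h')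
    · -- D' → M'
      rcases mem_phi_iff.mp hbc with ⟨rfl, _⟩ | ⟨hb', _, _⟩ | ⟨_, hc, hr'⟩ | ⟨hb', _, _⟩ |
        ⟨hb', _, _⟩ | ⟨hbZ, _, _⟩
      · exact mem_phi_iff.mpr (Or.inr (Or.inr (Or.inr (Or.inl ⟨ha, hb, hr⟩))))
      · exact absurd hb' hb.2
      · exact mem_phi_iff.mpr (Or.inr (Or.inr (Or.inr (Or.inl
          ⟨ha, hc, fun hac => hr (htr _ _ _ hac hr')⟩))))
      · exact absurd hb' hb.2
      · exact absurd hb' hb.2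
      · exact absurd hbZ (fun h' => hdj hb.1 h')
    · -- D' → Z
      rcases mem_phi_iff.mp hbc with ⟨rfl, _⟩ | ⟨hb', _, _⟩ | ⟨hb', _, _⟩ | ⟨hb', _, _⟩ |
        ⟨hb', _, _⟩ | ⟨_, hc, hr'⟩
      · exact mem_phi_iff.mpr (Or.inr (Or.inr (Or.inr (Or.inr (Or.inl ⟨ha, hb, hr⟩)))))
      · exact absurd hb (fun h' => hdj hb'.1 h')
      · exact absurd hb (fun h' => hdj hb'.1 h')
      · exact absurd hb (fun h' => hdj hb'.1 h')
      · exact absurd hb (fun h' => hdj hb'.1 h')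
      · exact mem_phi_iff.mpr (Or.inr (Or.inr (Or.inr (Or.inl
          ⟨ha, hc, fun hac => hr (htr _ _ _ hac hr')⟩))))
    · -- Z → M'
      rcases mem_phi_iff.mp hbc with ⟨rfl, _⟩ | ⟨hb', _, _⟩ | ⟨_, hc, hr'⟩ | ⟨hb', _, _⟩ |
        ⟨hb', _, _⟩ | ⟨hbZ, _, _⟩
      · exact mem_phi_iff.mpr (Or.inr (Or.inr (Or.inr (Or.inr (Or.inr ⟨ha, hb, hr⟩)))))
      · exact absurd hb' hb.2
      · exact mem_phi_iff.mpr (Or.inr (Or.inr (Or.inr (Or.inr (Or.inr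
          ⟨ha, hc, htr _ _ _ hr' hr⟩)))))
      · exact absurd hb' hb.2
      · exact absurd hb' hb.2
      · exact absurd hbZ (fun h' => hdj hb.1 h')

lemma phi_diag (hXZ : Disjoint X Z) {S : Set (α × α)} :
    restrict (phi X Z y S) Z = diag Z := by
  have hdj : ∀ {t : α}, t ∈ X → t ∈ Z → False := fun h1 h2 =>
    Set.disjoint_left.mp hXZ h1 h2
  ext ⟨a, b⟩
  constructor
  · rintro ⟨hmem, haZ, hbZ⟩
    rcases mem_phi_iff.mp hmem with ⟨h1, _⟩ | ⟨h, _, _⟩ | ⟨h, _, _⟩ | ⟨h, _, _⟩ |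
      ⟨h, _, _⟩ | ⟨_, h, _⟩
    · exact ⟨h1, haZ⟩
    · exact absurd haZ (fun h' => hdj h.1 h')
    · exact absurd haZ (fun h' => hdj h.1 h')
    · exact absurd haZ (fun h' => hdj h.1 h')
    · exact absurd haZ (fun h' => hdj h.1 h')
    · exact absurd hbZ (fun h' => hdj h.1 h')
  · rintro ⟨h1, haZ⟩
    exact ⟨mem_phi_iff.mpr (Or.inl ⟨h1, Or.inr haZ⟩), haZ, h1 ▸ haZ⟩

end Sside
lemma psi_phi_s1 {X Z : Set α} {y : α} (hX : X.Finite) (hZ : Z.Finite)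
    (hXZ : Disjoint X Z) (hy : y ∉ X ∪ Z) {S : Set (α × α)}
    (hS : IsPor (X ∪ Z ∪ {y}) S) (hmax : maxPts S = Z ∪ {y}) :
    psi X Z y (phi X Z y S) = S := by
  have hdj : ∀ {t : α}, t ∈ X → t ∈ Z → False := fun h1 h2 =>
    Set.disjoint_left.mp hXZ h1 h2
  have hyX : ∀ {t : α}, t ∈ X → t = y → False := fun h1 h2 => hy (Or.inl (h2 ▸ h1))
  have hM := phi_Mreg hX hZ hXZ hS hmax
  have hDD : X \ (X \ Dreg X y S) = Dreg X y S :=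
    Set.diff_diff_cancel_left (fun a ha => ha.1)
  ext ⟨a, b⟩
  rw [mem_psi_iff, hM, hDD]
  constructor
  · rintro (⟨rfl, hv⟩ | ⟨ha, hb, hr⟩ | ⟨ha, hb, hr⟩ | ⟨ha, hb, hnr⟩ | ⟨ha, hb, hnr⟩ |
      ⟨ha, hb, hr⟩ | ⟨ha, rfl⟩)
    · exact hS.2.1 a hv
    · -- a, b ∈ Dreg, (b,a) ∈ phi
      rcases mem_phi_iff.mp hr with ⟨h1, _⟩ | ⟨_, _, hr'⟩ | ⟨hb', _, _⟩ | ⟨_, ha', _⟩ |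
        ⟨_, haZ, _⟩ | ⟨hbZ, _, _⟩
      · subst h1
        exact hS.2.1 b (Or.inl (Or.inl hb.1))
      · exact hr'
      · exact absurd hb hb'.2
      · exact absurd ha ha'.2
      · exact absurd haZ (fun h' => hdj ha.1 h')
      · exact absurd hbZ (fun h' => hdj hb.1 h')
    · -- a, b ∈ X \ Dreg, (b,a) ∈ phi
      rcases mem_phi_iff.mp hr with ⟨h1, _⟩ | ⟨hb', _, _⟩ | ⟨_, _, hr'⟩ | ⟨hb', _, _⟩ |
        ⟨hb', _, _⟩ | ⟨hbZ, _, _⟩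
      · subst h1
        exact hS.2.1 b (Or.inl (Or.inl hb.1))
      · exact absurd hb' hb.2
      · exact hr'
      · exact absurd hb' hb.2
      · exact absurd hb' hb.2
      · exact absurd hbZ (fun h' => hdj hb.1 h')
    · -- a ∈ Dreg, b ∈ X \ Dreg, (a,b) ∉ phi
      by_contra h
      exact hnr (mem_phi_iff.mpr (Or.inr (Or.inr (Or.inr (Or.inl ⟨ha, hb, h⟩)))))
    · -- a ∈ Dreg, b ∈ Z, (a,b) ∉ phi
      by_contra h
      exact hnr (mem_phi_iff.mpr (Or.inr (Or.inr (Or.inr (Or.inr (Or.inl ⟨ha, hb, h⟩))))))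
    · -- a ∈ X \ Dreg, b ∈ Z, (b,a) ∈ phi
      rcases mem_phi_iff.mp hr with ⟨h1, _⟩ | ⟨hb', _, _⟩ | ⟨hb', _, _⟩ | ⟨hb', _, _⟩ |
        ⟨hb', _, _⟩ | ⟨_, _, hr'⟩
      · exact absurd hb (fun h' => hdj ha.1 (h1 ▸ h'))
      · exact absurd hb (fun h' => hdj hb'.1 h')
      · exact absurd hb (fun h' => hdj hb'.1 h')
      · exact absurd hb (fun h' => hdj hb'.1 h')
      · exact absurd hb (fun h' => hdj hb'.1 h')
      · exact hr'
    · -- a ∈ Dreg, b = y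
      exact ha.2
  · intro hr
    have haV := (hS.1 hr).1
    have hbV := (hS.1 hr).2
    by_cases hab : a = b
    · exact Or.inl ⟨hab, haV⟩
    have hmaxfact := rhs_max hmax
    rcases haV with haX | hay
    rotate_left
    · exact absurd (hmaxfact a b (Or.inr hay) hr).symm hab
    rcases haX with haX | haZ
    rotate_left
    · exact absurd (hmaxfact a b (Or.inl haZ) hr).symm hab
    rcases hbV with hbX | hby
    rotate_left
    · exact Or.inr (Or.inr (Or.inr (Or.inr (Or.inr (Or.inr ⟨⟨haX, hby ▸ hr⟩, hby⟩)))))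
    rcases hbX with hbX | hbZ
    · by_cases hbD : b ∈ Dreg X y S
      · have haD : a ∈ Dreg X y S := ⟨haX, hS.2.2.2 _ _ _ hr hbD.2⟩
        exact Or.inr (Or.inl ⟨haD, hbD,
          mem_phi_iff.mpr (Or.inr (Or.inl ⟨hbD, haD, hr⟩))⟩)
      · by_cases haD : a ∈ Dreg X y S
        · refine Or.inr (Or.inr (Or.inr (Or.inl ⟨haD, ⟨hbX, hbD⟩, ?_⟩)))
          intro h
          rcases mem_phi_iff.mp h with ⟨h1, _⟩ | ⟨_, hb', _⟩ | ⟨ha', _, _⟩ |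
            ⟨_, _, hnr⟩ | ⟨_, hbZ, _⟩ | ⟨haZ, _, _⟩
          · exact hab h1
          · exact hbD hb'
          · exact ha'.2 haD
          · exact hnr hr
          · exact hdj hbX hbZ
          · exact hdj haX haZ
        · exact Or.inr (Or.inr (Or.inl ⟨⟨haX, haD⟩, ⟨hbX, hbD⟩,
            mem_phi_iff.mpr (Or.inr (Or.inr (Or.inl ⟨⟨hbX, hbD⟩, ⟨haX, haD⟩, hr⟩)))⟩))
    · by_cases haD : a ∈ Dreg X y S
      · refine Or.inr (Or.inr (Or.inr (Or.inr (Or.inl ⟨haD, hbZ, ?_⟩))))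
        intro h
        rcases mem_phi_iff.mp h with ⟨h1, _⟩ | ⟨_, hb', _⟩ | ⟨ha', _, _⟩ |
          ⟨_, hb', _⟩ | ⟨_, _, hnr⟩ | ⟨haZ, _, _⟩
        · exact hdj (h1 ▸ haX) hbZ
        · exact hdj hb'.1 hbZ
        · exact ha'.2 haD
        · exact hdj hb'.1 hbZ
        · exact hnr hr
        · exact hdj haX haZ
      · exact Or.inr (Or.inr (Or.inr (Or.inr (Or.inr (Or.inl ⟨⟨haX, haD⟩, hbZ,
          mem_phi_iff.mpr (Or.inr (Or.inr (Or.inr (Or.inr (Or.inr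
            ⟨hbZ, ⟨haX, haD⟩, hr⟩)))))⟩)))))
/-- Erné's theorem. -/
theorem stmt1 {α : Type*} (X Z : Set α) (hX : X.Finite) (hZ : Z.Finite)
    (hXZ : Disjoint X Z) (y : α) (hy : y ∉ X ∪ Z) :
    {R : Set (α × α) | IsPor (X ∪ Z) R ∧ restrict R Z = diag Z}.ncard =
      {R : Set (α × α) | IsPor (X ∪ Z ∪ {y}) R ∧ maxPts R = Z ∪ {y}}.ncard := by
  have himg : psi X Z y '' {R : Set (α × α) | IsPor (X ∪ Z) R ∧ restrict R Z = diag Z} =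
      {R : Set (α × α) | IsPor (X ∪ Z ∪ {y}) R ∧ maxPts R = Z ∪ {y}} := by
    apply Set.Subset.antisymm
    · rintro S ⟨R, ⟨hR, hQ⟩, rfl⟩
      exact ⟨psi_isPor hXZ hy hR hQ, psi_max hXZ hy hR⟩
    · rintro S ⟨hS, hmax⟩
      exact ⟨phi X Z y S, ⟨phi_isPor hXZ hy hS, phi_diag hXZ⟩,
        psi_phi_s1 hX hZ hXZ hy hS hmax⟩
  have hinj : Set.InjOn (psi X Z y)
      {R : Set (α × α) | IsPor (X ∪ Z) R ∧ restrict R Z = diag Z} := by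
    intro R1 h1 R2 h2 he
    have e1 := phi_psi_s1 hXZ hy h1.1 h1.2
    have e2 := phi_psi_s1 hXZ hy h2.1 h2.2
    rw [← e1, ← e2, he]
  rw [← himg, Set.ncard_image_of_injOn hinj]

end Erne
end

section
/- Let X be a finite set, R a partial order relation on X, and M ⊆ X. If max M = max R, then γ_R(M) is an upper end of R. -/
namespace Erne

variable {α : Type*}

/-- In a finite p.o.r., above every element there is a maximal element. -/
lemma exists_maxPts_above {α : Type*} {X : Set α} (hX : X.Finite) {R : Set (α × α)}
    (hR : IsPor X R) {y : α} (hy : y ∈ X) :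
    ∃ z, (y, z) ∈ R ∧ z ∈ maxPts R := by
  obtain ⟨hsub, hrefl, hanti, htrans⟩ := hR
  have hS : (up R y).Finite := hX.subset (fun z hz => (hsub hz).2)
  have hne : (up R y).Nonempty := ⟨y, hrefl y hy⟩
  obtain ⟨a, ha, hmax⟩ : ∃ a ∈ up R y, ∀ a' ∈ up R y, down R a ≤ down R a' → down R a = down R a' := by
    obtain ⟨a, ha, hm⟩ := hS.exists_maximalFor (fun z => down R z) (up R y) hne
    exact ⟨a, ha, fun a' h1 h2 => le_antisymm h2 (hm h1 h2)⟩
  refine ⟨a, ha, ?_⟩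
  have haX : a ∈ X := (hsub ha).2
  have key : ∀ c, (a, c) ∈ R → c = a := by
    intro c hac
    have hcS : c ∈ up R y := htrans _ _ _ ha hac
    have hsub' : down R a ⊆ down R c := fun w hw => htrans _ _ _ hw hac
    have heq := hmax c hcS hsub'
    have : c ∈ down R a := by
      rw [heq]; exact hrefl c (hsub hac).2
    exact hanti _ _ this hac
  ext z
  simp only [up, Set.mem_setOf_eq, Set.mem_singleton_iff]
  constructor
  · intro hz; exact key z hz
  · intro hz; subst hz; exact hrefl _ haX

/-- If `max M = max R`, then `γ_R(M)` is an upper end of `R`. -/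
theorem stmt4 {α : Type*} (X : Set α) (hX : X.Finite) (R : Set (α × α))
    (hR : IsPor X R) (M : Set α) (hM : M ⊆ X) (h : maxOf R M = maxPts R) :
    IsUpperEnd R (gamma R M) := by
  intro x y hxy hx
  obtain ⟨m, hm, n, hn, hmx, hxn⟩ := hx
  obtain ⟨hsub, hrefl, hanti, htrans⟩ := hR
  have hyX : y ∈ X := (hsub hxy).2
  obtain ⟨z, hyz, hz⟩ := exists_maxPts_above hX ⟨hsub, hrefl, hanti, htrans⟩ hyX
  have hzM : z ∈ M := by
    have hz' : z ∈ maxOf R M := by rw [h]; exact hz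
    have : z ∈ up (restrict R M) z := by
      rw [hz']; rfl
    exact this.2.1
  exact ⟨m, hm, z, hzM, htrans _ _ _ hmx hxy, hyz⟩

end Erne
end

section
/- Let X, Y be finite disjoint sets and Q ∈ 𝔓(Y). For every P ∈ 𝔓(X) and every f ∈ ℋ_Q(Y, ℒ(P)), the relation Φ(f) = P ∪ Q ∪ ⋃_{y∈Y} (f(y) × {y}) is a partial order relation on X ∪ Y in which Y is an upper end and Φ(f)|_Y = Q; in particular Φ(f) ∈ 𝔐_Q(X,Y). -/
namespace Erne

variable {α : Type*}

/-- For `P ∈ 𝔓(X)` and `f ∈ ℋ_Q(Y, ℒ(P))`, the relation `Φ(f)`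
is a p.o.r. on `X ∪ Y` in which `Y` is an upper end and `Φ(f)|_Y = Q`;
in particular `Φ(f) ∈ 𝔐_Q(X,Y)`. -/
theorem stmt5 {α : Type*} (X Y : Set α) (hX : X.Finite) (hY : Y.Finite)
    (hXY : Disjoint X Y) (Q : Set (α × α)) (hQ : IsPor Y Q)
    (P : Set (α × α)) (hP : IsPor X P) (f : ↥Y → Set α) (hf : f ∈ Hset Q P Y) :
    IsPor (X ∪ Y) (Phi Q Y P f) ∧ IsUpperEnd (Phi Q Y P f) Y ∧
      restrict (Phi Q Y P f) Y = Q ∧ Phi Q Y P f ∈ Mset Q X Y := by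
  classical
  have hdis : ∀ {x : α}, x ∈ X → x ∈ Y → False := fun hx hy =>
    Set.disjoint_left.mp hXY hx hy
  have hPX : ∀ {a b : α}, (a, b) ∈ P → a ∈ X ∧ b ∈ X := fun h =>
    hP.1 h
  have hQY : ∀ {a b : α}, (a, b) ∈ Q → a ∈ Y ∧ b ∈ Y := fun h =>
    hQ.1 h
  have hfX : ∀ y : ↥Y, f y ⊆ X := fun y x hx =>
    (hPX ((hf.1 y).1 hx)).1
  -- characterize membership in Phi
  have hmem : ∀ {a b : α}, (a, b) ∈ Phi Q Y P f ↔
      (a, b) ∈ P ∨ (a, b) ∈ Q ∨ ∃ h : b ∈ Y, a ∈ f ⟨b, h⟩ := by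
    intro a b
    simp [Phi, or_assoc]
  have hpor : IsPor (X ∪ Y) (Phi Q Y P f) := by
    refine ⟨?_, ?_, ?_, ?_⟩
    · rintro ⟨a, b⟩ hab
      rcases hmem.mp hab with h | h | ⟨hb, ha⟩
      · exact ⟨Or.inl (hPX h).1, Or.inl (hPX h).2⟩
      · exact ⟨Or.inr (hQY h).1, Or.inr (hQY h).2⟩
      · exact ⟨Or.inl (hfX _ ha), Or.inr hb⟩
    · intro x hx
      rcases hx with hx | hx
      · exact hmem.mpr (Or.inl (hP.2.1 x hx))
      · exact hmem.mpr (Or.inr (Or.inl (hQ.2.1 x hx)))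
    · intro x y hxy hyx
      rcases hmem.mp hxy with h1 | h1 | ⟨hy, hx1⟩ <;>
        rcases hmem.mp hyx with h2 | h2 | ⟨hx, hy2⟩
      · exact hP.2.2.1 x y h1 h2
      · exact absurd (hQY h2).1 (fun h => hdis (hPX h1).2 h)
      · exact absurd hx (fun h => hdis (hPX h1).1 h)
      · exact absurd (hPX h2).2 (fun h => hdis h (hQY h1).1)
      · exact hQ.2.2.1 x y h1 h2
      · exact absurd (hfX _ hy2) (fun h => hdis h (hQY h1).2)
      · exact absurd (hPX h2).1 (fun h => hdis h hy)
      · exact absurd (hfX _ hx1) (fun h => hdis h (hQY h2).2)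
      · exact absurd (hfX _ hx1) (fun h => hdis h hx)
    · intro x y z hxy hyz
      rcases hmem.mp hxy with h1 | h1 | ⟨hy, hx1⟩ <;>
        rcases hmem.mp hyz with h2 | h2 | ⟨hz, hy2⟩
      · exact hmem.mpr (Or.inl (hP.2.2.2 x y z h1 h2))
      · exact absurd (hQY h2).1 (fun h => hdis (hPX h1).2 h)
      · exact hmem.mpr (Or.inr (Or.inr ⟨hz, (hf.1 ⟨z, hz⟩).2 x y h1 hy2⟩))
      · exact absurd (hPX h2).1 (fun h => hdis h (hQY h1).2)
      · exact hmem.mpr (Or.inr (Or.inl (hQ.2.2.2 x y z h1 h2)))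
      · exact absurd (hfX _ hy2) (fun h => hdis h (hQY h1).2)
      · exact absurd (hPX h2).1 (fun h => hdis h hy)
      · exact hmem.mpr (Or.inr (Or.inr ⟨(hQY h2).2,
          hf.2 ⟨y, hy⟩ ⟨z, (hQY h2).2⟩ h2 hx1⟩))
      · exact absurd (hfX _ hy2) (fun h => hdis h hy)
  have hupper : IsUpperEnd (Phi Q Y P f) Y := by
    intro x y hxy hx
    rcases hmem.mp hxy with h | h | ⟨hy, _⟩
    · exact absurd (hPX h).1 (fun h' => hdis h' hx)
    · exact (hQY h).2
    · exact hy
  have hres : restrict (Phi Q Y P f) Y = Q := by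
    apply Set.eq_of_subset_of_subset
    · rintro ⟨a, b⟩ ⟨hab, ha, hb⟩
      rcases hmem.mp hab with h | h | ⟨_, haf⟩
      · exact absurd (hPX h).1 (fun h' => hdis h' ha)
      · exact h
      · exact absurd (hfX _ haf) (fun h' => hdis h' ha)
    · rintro ⟨a, b⟩ hab
      exact ⟨hmem.mpr (Or.inr (Or.inl hab)), (hQY hab).1, (hQY hab).2⟩
  have hconv : IsConvex (Phi Q Y P f) Y := by
    intro a b x ha hb hax hxb
    rcases hmem.mp hax with h | h | ⟨hx, haf⟩
    · exact absurd (hPX h).1 (fun h' => hdis h' ha)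
    · exact (hQY h).2
    · exact absurd (hfX _ haf) (fun h' => hdis h' ha)
  exact ⟨hpor, hupper, hres, ⟨hpor, hupper⟩, hpor, hres, hconv⟩

end Erne
end

section
/- Let X, Y be finite disjoint sets and Q ∈ 𝔓(Y). The mapping Φ : 𝔉_Q(X,Y) → 𝔐_Q(X,Y), f ↦ S(f) ∪ Q ∪ ⋃_{y∈Y} (f(y) × {y}), is a bijection, whose inverse sends R ∈ 𝔐_Q(X,Y) to the mapping Y → ℒ(R|_X), y ↦ (↓_R y) \ Y. -/
namespace Erne

variable {α : Type*}

section Aux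

variable {X Y : Set α} {Q : Set (α × α)}

lemma mem_Phi {P : Set (α × α)} {f : ↥Y → Set α} {x y : α} :
    (x, y) ∈ Phi Q Y P f ↔ (x, y) ∈ P ∨ (x, y) ∈ Q ∨ ∃ h : y ∈ Y, x ∈ f ⟨y, h⟩ := by
  simp only [Phi, Set.mem_union, Set.mem_setOf_eq, or_assoc]

lemma phi_mem_Mset (hXY : Disjoint X Y) (hQ : IsPor Y Q)
    {P : Set (α × α)} {f : ↥Y → Set α} (hP : IsPor X P) (hf : f ∈ Hset Q P Y) :
    Phi Q Y P f ∈ Mset Q X Y := by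
  obtain ⟨hPs, hPr, hPa, hPt⟩ := hP
  obtain ⟨hQs, hQr, hQa, hQt⟩ := hQ
  have hfX : ∀ (y : ↥Y) {x : α}, x ∈ f y → x ∈ X :=
    fun y x hx => (hPs ((hf.1 y).1 hx)).1
  have hXnY : ∀ {a : α}, a ∈ X → a ∉ Y := fun ha => Set.disjoint_left.mp hXY ha
  have hsub : Phi Q Y P f ⊆ (X ∪ Y) ×ˢ (X ∪ Y) := by
    rintro ⟨x, y⟩ h
    rcases mem_Phi.mp h with h | h | ⟨hy, hx⟩
    · exact ⟨Or.inl (hPs h).1, Or.inl (hPs h).2⟩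
    · exact ⟨Or.inr (hQs h).1, Or.inr (hQs h).2⟩
    · exact ⟨Or.inl (hfX _ hx), Or.inr hy⟩
  have hpor : IsPor (X ∪ Y) (Phi Q Y P f) := by
    refine ⟨hsub, ?_, ?_, ?_⟩
    · rintro x (hx | hx)
      · exact mem_Phi.mpr (Or.inl (hPr x hx))
      · exact mem_Phi.mpr (Or.inr (Or.inl (hQr x hx)))
    · intro x y hxy hyx
      rcases mem_Phi.mp hxy with h1 | h1 | ⟨hy, hx⟩
      · rcases mem_Phi.mp hyx with h2 | h2 | ⟨hy2, hx2⟩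
        · exact hPa x y h1 h2
        · exact absurd (hQs h2).1 (hXnY (hPs h1).2)
        · exact absurd hy2 (hXnY (hPs h1).1)
      · rcases mem_Phi.mp hyx with h2 | h2 | ⟨hy2, hx2⟩
        · exact absurd (hQs h1).1 (hXnY (hPs h2).2)
        · exact hQa x y h1 h2
        · exact absurd (hQs h1).2 (hXnY (hfX _ hx2))
      · rcases mem_Phi.mp hyx with h2 | h2 | ⟨hy2, hx2⟩
        · exact absurd hy (hXnY (hPs h2).1)
        · exact absurd (hQs h2).2 (hXnY (hfX _ hx))
        · exact absurd hy2 (hXnY (hfX _ hx))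
    · intro x y z hxy hyz
      rcases mem_Phi.mp hxy with h1 | h1 | ⟨hy, hx⟩
      · rcases mem_Phi.mp hyz with h2 | h2 | ⟨hz, hy2⟩
        · exact mem_Phi.mpr (Or.inl (hPt x y z h1 h2))
        · exact absurd (hQs h2).1 (hXnY (hPs h1).2)
        · exact mem_Phi.mpr (Or.inr (Or.inr ⟨hz, (hf.1 _).2 x y h1 hy2⟩))
      · rcases mem_Phi.mp hyz with h2 | h2 | ⟨hz, hy2⟩
        · exact absurd (hQs h1).2 (hXnY (hPs h2).1)
        · exact mem_Phi.mpr (Or.inr (Or.inl (hQt x y z h1 h2)))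
        · exact absurd (hQs h1).2 (hXnY (hfX _ hy2))
      · rcases mem_Phi.mp hyz with h2 | h2 | ⟨hz, hy2⟩
        · exact absurd hy (hXnY (hPs h2).1)
        · exact mem_Phi.mpr
            (Or.inr (Or.inr ⟨(hQs h2).2, hf.2 ⟨y, hy⟩ ⟨z, (hQs h2).2⟩ h2 hx⟩))
        · exact absurd hy (hXnY (hfX _ hy2))
  have hupper : IsUpperEnd (Phi Q Y P f) Y := by
    intro x y hxy hx
    rcases mem_Phi.mp hxy with h | h | ⟨hy, _⟩
    · exact absurd hx (hXnY (hPs h).1)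
    · exact (hQs h).2
    · exact hy
  have hres : restrict (Phi Q Y P f) Y = Q := by
    ext ⟨x, y⟩
    constructor
    · rintro ⟨hmem, hx, hy⟩
      rcases mem_Phi.mp hmem with h | h | ⟨_, hx'⟩
      · exact absurd hx (hXnY (hPs h).1)
      · exact h
      · exact absurd hx (hXnY (hfX _ hx'))
    · intro h
      exact ⟨mem_Phi.mpr (Or.inr (Or.inl h)), (hQs h).1, (hQs h).2⟩
  exact ⟨⟨hpor, hupper⟩, hpor, hres, fun a b x ha _ hax _ => hupper a x hax ha⟩

lemma phi_left (hXY : Disjoint X Y) (hQ : IsPor Y Q) {P : Set (α × α)}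
    {f : ↥Y → Set α} (hP : IsPor X P) (hf : f ∈ Hset Q P Y) :
    restrict (Phi Q Y P f) X = P ∧
      (fun y : ↥Y => down (Phi Q Y P f) (y : α) \ Y) = f := by
  have hfX : ∀ (y : ↥Y) {x : α}, x ∈ f y → x ∈ X :=
    fun y x hx => (hP.1 ((hf.1 y).1 hx)).1
  have hXnY : ∀ {a : α}, a ∈ X → a ∉ Y := fun ha => Set.disjoint_left.mp hXY ha
  constructor
  · ext ⟨x, y⟩
    constructor
    · rintro ⟨hmem, hx, hy⟩
      rcases mem_Phi.mp hmem with h | h | ⟨hy', _⟩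
      · exact h
      · exact absurd (hQ.1 h).1 (hXnY hx)
      · exact absurd hy' (hXnY hy)
    · intro h
      exact ⟨mem_Phi.mpr (Or.inl h), (hP.1 h).1, (hP.1 h).2⟩
  · funext y
    ext x
    constructor
    · rintro ⟨hmem, hxY⟩
      rcases mem_Phi.mp hmem with h | h | ⟨hy, hx⟩
      · exact absurd y.2 (hXnY (hP.1 h).2)
      · exact absurd (hQ.1 h).1 hxY
      · exact hx
    · intro hx
      exact ⟨mem_Phi.mpr (Or.inr (Or.inr ⟨y.2, hx⟩)), hXnY (hfX y hx)⟩

lemma phi_right (hXY : Disjoint X Y) (hQ : IsPor Y Q) {R : Set (α × α)}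
    (hR : R ∈ Mset Q X Y) :
    (restrict R X, fun y : ↥Y => down R (y : α) \ Y) ∈ Fset Q X Y ∧
      Phi Q Y (restrict R X) (fun y : ↥Y => down R (y : α) \ Y) = R := by
  obtain ⟨⟨⟨hRs, hRr, hRa, hRt⟩, hup⟩, _, hresQ, _⟩ := hR
  have hQR : Q ⊆ R := by rw [← hresQ]; exact Set.inter_subset_left
  have hXnY : ∀ {a : α}, a ∈ X → a ∉ Y := fun ha => Set.disjoint_left.mp hXY ha
  have hPor : IsPor X (restrict R X) := by
    refine ⟨Set.inter_subset_right, ?_, ?_, ?_⟩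
    · intro x hx; exact ⟨hRr x (Or.inl hx), hx, hx⟩
    · intro x y h1 h2; exact hRa x y h1.1 h2.1
    · rintro x y z ⟨h1, hx, -⟩ ⟨h2, -, hz⟩; exact ⟨hRt x y z h1 h2, hx, hz⟩
  have hmemF : (restrict R X, fun y : ↥Y => down R (y : α) \ Y) ∈ Fset Q X Y := by
    refine ⟨hPor, ?_, ?_⟩
    · intro y
      constructor
      · rintro x ⟨hxy, hxY⟩
        have hxX : x ∈ X := ((hRs hxy).1).resolve_right hxY
        exact ⟨hRr x (Or.inl hxX), hxX, hxX⟩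
      · rintro a b ⟨hab, haX, hbX⟩ ⟨hby, hbY⟩
        exact ⟨hRt a b _ hab hby, hXnY haX⟩
    · rintro a b hab x ⟨hxa, hxY⟩
      exact ⟨hRt x _ _ hxa (hQR hab), hxY⟩
  refine ⟨hmemF, ?_⟩
  ext ⟨x, y⟩
  rw [mem_Phi]
  constructor
  · rintro (⟨h, -, -⟩ | h | ⟨hy, hx, -⟩)
    · exact h
    · exact hQR h
    · exact hx
  · intro h
    rcases (hRs h).1 with hx | hx
    · rcases (hRs h).2 with hy | hy
      · exact Or.inl ⟨h, hx, hy⟩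
      · exact Or.inr (Or.inr ⟨hy, h, hXnY hx⟩)
    · exact Or.inr (Or.inl (by rw [← hresQ]; exact ⟨h, hx, hup x y h hx⟩))

end Aux

/-- `Φ : 𝔉_Q(X,Y) → 𝔐_Q(X,Y)` is a bijection with inverse
`R ↦ (y ↦ (↓_R y) \ Y)` (together with `S(f) = R|_X`). -/
theorem stmt6 {α : Type*} (X Y : Set α) (hX : X.Finite) (hY : Y.Finite)
    (hXY : Disjoint X Y) (Q : Set (α × α)) (hQ : IsPor Y Q) :
    Set.BijOn (fun pf : Set (α × α) × (↥Y → Set α) => Phi Q Y pf.1 pf.2)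
      (Fset Q X Y) (Mset Q X Y) ∧
    ∀ R ∈ Mset Q X Y,
      (restrict R X, fun y : ↥Y => down R (y : α) \ Y) ∈ Fset Q X Y ∧
      Phi Q Y (restrict R X) (fun y : ↥Y => down R (y : α) \ Y) = R := by
  refine ⟨⟨fun pf hpf => phi_mem_Mset hXY hQ hpf.1 hpf.2, ?_, ?_⟩,
    fun R hR => phi_right hXY hQ hR⟩
  · intro pf hpf pf' hpf' heq
    have heq' : Phi Q Y pf.1 pf.2 = Phi Q Y pf'.1 pf'.2 := heq
    have h1 := phi_left hXY hQ hpf.1 hpf.2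
    have h2 := phi_left hXY hQ hpf'.1 hpf'.2
    refine Prod.ext ?_ ?_
    · rw [← h1.1, ← h2.1, heq']
    · rw [← h1.2, ← h2.2, heq']
  · intro R hR
    exact ⟨_, (phi_right hXY hQ hR).1, (phi_right hXY hQ hR).2⟩

end Erne
end

section
/- Let X, Y be finite disjoint sets, Z ⊆ Y, Q ∈ 𝔓(Z), and let R ∈ 𝔘(X,Y) ∩ ℭ_Q(X ∪ (Y\Z), Z). If Y ⊆ ↓_R Z, then R ∈ 𝔐_Q(X ∪ (Y\Z), Z), i.e., Z is additionally an upper end of R. -/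
namespace Erne

variable {α : Type*}

/-- If `R ∈ 𝔘(X,Y) ∩ ℭ_Q(X ∪ (Y\Z), Z)` and `Y ⊆ ↓_R Z`,
then `R ∈ 𝔐_Q(X ∪ (Y\Z), Z)`. -/
theorem stmt8 {α : Type*} (X Y : Set α) (hX : X.Finite) (hY : Y.Finite)
    (hXY : Disjoint X Y) (Z : Set α) (hZY : Z ⊆ Y)
    (Q : Set (α × α)) (hQ : IsPor Z Q) (R : Set (α × α))
    (hR : R ∈ Uset X Y ∩ Cset Q (X ∪ (Y \ Z)) Z) (h : Y ⊆ downSet R Z) :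
    R ∈ Mset Q (X ∪ (Y \ Z)) Z := by
  obtain ⟨⟨hporXY, hUY⟩, hC⟩ := hR
  refine ⟨⟨hC.1, ?_⟩, hC⟩
  intro x y hxy hxZ
  have hyY : y ∈ Y := hUY x y hxy (hZY hxZ)
  obtain ⟨z, hzZ, hyz⟩ := h hyY
  exact hC.2.2 x z y hxZ hzZ hxy hyz

end Erne
end

section
/- Let X, Y be finite disjoint sets. The mapping τ_{X,Y} : 𝔘(X,Y) → 𝔘(X,Y) defined by τ_{X,Y}(R) = (R|_X)^d ∪ ((X×Y)\R) ∪ (R|_Y)^d is well defined (i.e., τ_{X,Y}(R) is a partial order relation on X∪Y in which Y is an upper end) and is a self-inverse bijection: τ_{X,Y}(τ_{X,Y}(R)) = R for all R ∈ 𝔘(X,Y). -/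
namespace Erne

variable {α : Type*}

lemma mem_tau_aux {X Y : Set α} {R : Set (α × α)} {a b : α} :
    (a, b) ∈ tau X Y R ↔
      ((b, a) ∈ R ∧ b ∈ X ∧ a ∈ X) ∨ (a ∈ X ∧ b ∈ Y ∧ (a, b) ∉ R) ∨
        ((b, a) ∈ R ∧ b ∈ Y ∧ a ∈ Y) := by
  simp only [tau, dual, restrict, Set.mem_union, Set.mem_setOf_eq, Set.mem_inter_iff,
    Set.mem_prod, Set.mem_diff]
  tauto

lemma tau_mem_aux {X Y : Set α} (hXY : Disjoint X Y) {R : Set (α × α)}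
    (hR : R ∈ Uset X Y) : tau X Y R ∈ Uset X Y := by
  obtain ⟨⟨hsub, hrefl, hanti, htrans⟩, hup⟩ := hR
  have hd : ∀ {c : α}, c ∈ X → c ∈ Y → False := fun hc hc' =>
    Set.disjoint_left.mp hXY hc hc'
  refine ⟨⟨?_, ?_, ?_, ?_⟩, ?_⟩
  · rintro ⟨a, b⟩ h
    rw [mem_tau_aux] at h
    rcases h with ⟨_, hb, ha⟩ | ⟨ha, hb, _⟩ | ⟨_, hb, ha⟩ <;>
      exact ⟨by simp [ha], by simp [hb]⟩
  · rintro x (hx | hx) <;> rw [mem_tau_aux]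
    · exact Or.inl ⟨hrefl x (Or.inl hx), hx, hx⟩
    · exact Or.inr (Or.inr ⟨hrefl x (Or.inr hx), hx, hx⟩)
  · intro x y h1 h2
    rw [mem_tau_aux] at h1 h2
    rcases h1 with ⟨h1, hy1, hx1⟩ | ⟨hx1, hy1, h1⟩ | ⟨h1, hy1, hx1⟩ <;>
      rcases h2 with ⟨h2, hx2, hy2⟩ | ⟨hy2, hx2, h2⟩ | ⟨h2, hx2, hy2⟩
    · exact hanti x y h2 h1
    · exact (hd hx1 hx2).elim
    · exact (hd hx1 hx2).elim
    · exact (hd hy2 hy1).elim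
    · exact (hd hx1 hx2).elim
    · exact (hd hx1 hx2).elim
    · exact (hd hy2 hy1).elim
    · exact (hd hy2 hy1).elim
    · exact hanti x y h2 h1
  · intro x y z h1 h2
    rw [mem_tau_aux] at h1 h2 ⊢
    rcases h1 with ⟨h1, hy1, hx1⟩ | ⟨hx1, hy1, h1⟩ | ⟨h1, hy1, hx1⟩ <;>
      rcases h2 with ⟨h2, hz2, hy2⟩ | ⟨hy2, hz2, h2⟩ | ⟨h2, hz2, hy2⟩
    · exact Or.inl ⟨htrans z y x h2 h1, hz2, hx1⟩
    · refine Or.inr (Or.inl ⟨hx1, hz2, fun hxz => h2 (htrans y x z h1 hxz)⟩)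
    · exact (hd hy1 hy2).elim
    · exact (hd hy2 hy1).elim
    · exact (hd hy2 hy1).elim
    · refine Or.inr (Or.inl ⟨hx1, hz2, fun hxz => h1 (htrans x z y hxz h2)⟩)
    · exact (hd hy2 hy1).elim
    · exact (hd hy2 hy1).elim
    · exact Or.inr (Or.inr ⟨htrans z y x h2 h1, hz2, hx1⟩)
  · intro x y h hx
    rw [mem_tau_aux] at h
    rcases h with ⟨_, _, hx'⟩ | ⟨hx', _, _⟩ | ⟨_, hy, _⟩
    · exact absurd hx (fun h => hd hx' h)
    · exact absurd hx (fun h => hd hx' h)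
    · exact hy

lemma tau_tau_aux {X Y : Set α} (hXY : Disjoint X Y) {R : Set (α × α)}
    (hR : R ∈ Uset X Y) : tau X Y (tau X Y R) = R := by
  obtain ⟨⟨hsub, hrefl, hanti, htrans⟩, hup⟩ := hR
  have hd : ∀ {c : α}, c ∈ X → c ∈ Y → False := fun hc hc' =>
    Set.disjoint_left.mp hXY hc hc'
  ext ⟨a, b⟩
  rw [mem_tau_aux]
  constructor
  · rintro (⟨h1, hb, ha⟩ | ⟨ha, hb, h1⟩ | ⟨h1, hb, ha⟩)
    · rw [mem_tau_aux] at h1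
      rcases h1 with ⟨h2, _, _⟩ | ⟨hb', ha', _⟩ | ⟨_, ha', _⟩
      · exact h2
      · exact absurd ha (fun h => hd h ha')
      · exact absurd ha (fun h => hd h ha')
    · by_contra hab
      exact h1 (mem_tau_aux.mpr (Or.inr (Or.inl ⟨ha, hb, hab⟩)))
    · rw [mem_tau_aux] at h1
      rcases h1 with ⟨_, _, hb'⟩ | ⟨hb', _, _⟩ | ⟨h2, _, _⟩
      · exact absurd hb (fun h => hd hb' h)
      · exact absurd hb (fun h => hd hb' h)
      · exact h2
  · intro hab
    have ha : a ∈ X ∪ Y := (hsub hab).1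
    have hb : b ∈ X ∪ Y := (hsub hab).2
    rcases ha with ha | ha
    · rcases hb with hb | hb
      · exact Or.inl ⟨mem_tau_aux.mpr (Or.inl ⟨hab, ha, hb⟩), hb, ha⟩
      · refine Or.inr (Or.inl ⟨ha, hb, fun h => ?_⟩)
        rw [mem_tau_aux] at h
        rcases h with ⟨_, hb', _⟩ | ⟨_, _, h'⟩ | ⟨_, _, ha'⟩
        · exact hd hb' hb
        · exact h' hab
        · exact hd ha ha'
    · have hb' : b ∈ Y := hup a b hab ha
      exact Or.inr (Or.inr ⟨mem_tau_aux.mpr (Or.inr (Or.inr ⟨hab, ha, hb'⟩)), hb', ha⟩)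

lemma stmt9_aux {X Y : Set α} (hXY : Disjoint X Y) :
    (∀ R ∈ Uset X Y, tau X Y R ∈ Uset X Y) ∧
    (∀ R ∈ Uset X Y, tau X Y (tau X Y R) = R) ∧
    Set.BijOn (tau X Y) (Uset X Y) (Uset X Y) := by
  refine ⟨fun R hR => tau_mem_aux hXY hR, fun R hR => tau_tau_aux hXY hR,
    fun R hR => tau_mem_aux hXY hR, ?_, ?_⟩
  · intro R hR S hS hRS
    calc R = tau X Y (tau X Y R) := (tau_tau_aux hXY hR).symm
    _ = tau X Y (tau X Y S) := by rw [hRS]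
    _ = S := tau_tau_aux hXY hS
  · intro R hR
    exact ⟨tau X Y R, tau_mem_aux hXY hR, tau_tau_aux hXY hR⟩

/-- `τ_{X,Y}` is a well-defined self-inverse bijection of `𝔘(X,Y)`. -/
theorem stmt9 {α : Type*} (X Y : Set α) (hX : X.Finite) (hY : Y.Finite)
    (hXY : Disjoint X Y) :
    (∀ R ∈ Uset X Y, tau X Y R ∈ Uset X Y) ∧
    (∀ R ∈ Uset X Y, tau X Y (tau X Y R) = R) ∧
    Set.BijOn (tau X Y) (Uset X Y) (Uset X Y) := by
  exact stmt9_aux hXY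

end Erne
end
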